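/- arXiv:1211.6868 — 9 statements merged into one kernel-verified Lean document; each statement's English description precedes it below -/
import Mathlib

section
/- Let σ_a², σ_b² > 0 with σ_a² + σ_b² = 1, θ > 0, p_c > 0, k ≥ 1 an integer, and h̄_1, …, h̄_k > 0. Suppose β ∈ (0,1) and the powers P̄_n = θ·(β·σ_a² + σ_b²)/(β·h̄_n) for 1 ≤ n ≤ k satisfy ∑_{n=1}^k P̄_n·h̄_n = p_c/(1−β). Then β satisfies β² − c(k)·β − d = 0, where c(k) = 1 − σ_b²/σ_a² − p_c/(k·θ·σ_a²) and d = σ_b²/σ_a². -/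
/-- If each of `k` streams exactly meets the SNR threshold, i.e.
`P̄_n = θ(βσa² + σb²)/(βh̄_n)`, and the harvested power exactly meets the circuit
power, i.e. `∑ P̄_n h̄_n = p_c/(1−β)`, then the splitting ratio `β ∈ (0,1)`
satisfies `β² − c(k)β − d = 0` with `c(k) = 1 − σb²/σa² − p_c/(kθσa²)` and
`d = σb²/σa²`. -/
theorem stmt_4 (σa2 σb2 θ pc β : ℝ) (k : ℕ) (hbar : Fin k → ℝ)
    (ha : 0 < σa2) (hb : 0 < σb2) (hsum : σa2 + σb2 = 1)
    (hθ : 0 < θ) (hpc : 0 < pc) (hk : 1 ≤ k)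
    (hpos : ∀ n, 0 < hbar n)
    (hβ0 : 0 < β) (hβ1 : β < 1)
    (heq : (∑ n, (θ * (β * σa2 + σb2) / (β * hbar n)) * hbar n) = pc / (1 - β)) :
    β ^ 2 - (1 - σb2 / σa2 - pc / (k * θ * σa2)) * β - σb2 / σa2 = 0 := by
  have hterm : ∀ n : Fin k, (θ * (β * σa2 + σb2) / (β * hbar n)) * hbar n
      = θ * (β * σa2 + σb2) / β := by
    intro n
    field_simp [hβ0.ne', (hpos n).ne']
  rw [Finset.sum_congr rfl (fun n _ => hterm n), Finset.sum_const,
    Finset.card_univ, Fintype.card_fin, nsmul_eq_mul] at heq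
  have hk0 : (0:ℝ) < (k:ℝ) := by exact_mod_cast Nat.lt_of_lt_of_le Nat.zero_lt_one hk
  have h1β : (1:ℝ) - β ≠ 0 := by linarith
  have key : (k:ℝ) * θ * (β * σa2 + σb2) * (1 - β) = pc * β := by
    field_simp at heq
    linarith [heq]
  have hσsub : σb2 = 1 - σa2 := by linarith
  field_simp
  linear_combination (-1) * key
end

section
/- Let K ≥ 1, let g : Fin K → ℝ be strictly positive channel gains, and let B ≥ 0. Suppose η > 0 and the set A = {n : η ≥ 1/g_n} is nonempty with ∑_{n∈A} (η − 1/g_n) = B. Then the allocation Q*_n = max(η − 1/g_n, 0) maximizes ∑_{n=1}^K log(1 + Q_n·g_n) over all Q : Fin K → ℝ with Q_n ≥ 0 for all n and ∑_{n=1}^K Q_n ≤ B. -/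
/-- Classic water-filling optimality: if `η > 0`, the set `A = {n : η ≥ 1/g_n}`
is nonempty and `∑_{n∈A} (η − 1/g_n) = B`, then `Q*_n = max(η − 1/g_n, 0)`
maximizes `∑ log(1 + Q_n g_n)` over all `Q ≥ 0` with `∑ Q_n ≤ B`. -/
theorem stmt_7 (K : ℕ) (hK : 1 ≤ K) (g : Fin K → ℝ) (B η : ℝ)
    (hg : ∀ n, 0 < g n) (hB : 0 ≤ B) (hη : 0 < η)
    (hA : (Finset.univ.filter (fun n : Fin K => 1 / g n ≤ η)).Nonempty)
    (hsum : (∑ n ∈ Finset.univ.filter (fun n : Fin K => 1 / g n ≤ η),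
        (η - 1 / g n)) = B) :
    (∀ n, 0 ≤ max (η - 1 / g n) 0) ∧
    (∑ n, max (η - 1 / g n) 0) ≤ B ∧
    ∀ Q : Fin K → ℝ, (∀ n, 0 ≤ Q n) → (∑ n, Q n) ≤ B →
      (∑ n, Real.log (1 + Q n * g n)) ≤
        ∑ n, Real.log (1 + max (η - 1 / g n) 0 * g n) := by
  have hQ' : ∀ n, max (η - 1 / g n) 0 = if 1 / g n ≤ η then η - 1 / g n else 0 := by
    intro n
    split
    · next h => exact max_eq_left (by linarith)
    · next h => exact max_eq_right (by push_neg at h; linarith)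
  have hsumQ : (∑ n, max (η - 1 / g n) 0) = B := by
    rw [← hsum, Finset.sum_filter]
    exact Finset.sum_congr rfl fun n _ => hQ' n
  refine ⟨fun n => le_max_right _ _, hsumQ.le, ?_⟩
  intro Q hQ hQB
  set Qs : Fin K → ℝ := fun n => max (η - 1 / g n) 0 with hQs
  have hQs0 : ∀ n, 0 ≤ Qs n := fun n => le_max_right _ _
  have key : ∀ n, Real.log (1 + Q n * g n) ≤
      Real.log (1 + Qs n * g n) + (Q n - Qs n) / η := by
    intro n
    have hg' := hg n
    have hgne : g n ≠ 0 := hg'.ne'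
    have hc : 0 < 1 + Qs n * g n := by
      have := mul_nonneg (hQs0 n) hg'.le; linarith
    have hx : 0 < 1 + Q n * g n := by
      have := mul_nonneg (hQ n) hg'.le; linarith
    have hlog := Real.log_le_sub_one_of_pos (div_pos hx hc)
    rw [Real.log_div hx.ne' hc.ne'] at hlog
    have hstep : (1 + Q n * g n) / (1 + Qs n * g n) - 1 ≤ (Q n - Qs n) / η := by
      by_cases h : 1 / g n ≤ η
      · have hQsn : Qs n = η - 1 / g n := by
          simp only [hQs]; exact max_eq_left (by linarith)
        have hc' : 1 + Qs n * g n = η * g n := by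
          rw [hQsn]; field_simp; ring
        rw [hc']
        have key2 : (1 + Q n * g n) / (η * g n) - 1 = (Q n - Qs n) / η := by
          rw [hQsn]; field_simp; ring
        exact key2.le
      · have hQsn : Qs n = 0 := by
          simp only [hQs]; exact max_eq_right (by push_neg at h; linarith)
        push_neg at h
        have hglt : g n < 1 / η := by
          rw [lt_div_iff₀ hη]
          have h2 : η * g n < 1 := (lt_div_iff₀ hg').mp h
          nlinarith
        rw [hQsn]
        simp only [zero_mul, add_zero, div_one, sub_zero]
        calc 1 + Q n * g n - 1 = Q n * g n := by ring
          _ ≤ Q n * (1 / η) := mul_le_mul_of_nonneg_left hglt.le (hQ n)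
          _ = Q n / η := by ring
    linarith
  calc ∑ n, Real.log (1 + Q n * g n)
      ≤ ∑ n, (Real.log (1 + Qs n * g n) + (Q n - Qs n) / η) :=
        Finset.sum_le_sum fun n _ => key n
    _ = (∑ n, Real.log (1 + Qs n * g n)) + ((∑ n, Q n) - ∑ n, Qs n) / η := by
        rw [Finset.sum_add_distrib, ← Finset.sum_div, ← Finset.sum_sub_distrib]
    _ ≤ ∑ n, Real.log (1 + Qs n * g n) := by
        have : (∑ n, Q n) - ∑ n, Qs n ≤ 0 := by rw [hsumQ]; linarith
        have := div_nonpos_of_nonpos_of_nonneg this hη.le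
        linarith
end

section
/- Let K ≥ 1, let g' : Fin K → ℝ and g : Fin K → ℝ be strictly positive downlink and uplink channel gains, and let p_t > 0, p_c > 0 satisfy p_t·max_n g'_n ≥ p_c. Then the supremum, over all downlink allocations P with P_n ≥ 0 and ∑_{n=1}^K P_n ≤ p_t satisfying ∑_{n=1}^K P_n·g'_n ≥ p_c, and all uplink allocations Q with Q_n ≥ 0 and ∑_{n=1}^K Q_n ≤ ∑_{n=1}^K P_n·g'_n − p_c, of the uplink throughput ∑_{n=1}^K log(1 + Q_n·g_n), equals the supremum of ∑_{n=1}^K log(1 + Q_n·g_n) over Q ≥ 0 with ∑_{n=1}^K Q_n ≤ p_t·max_n g'_n − p_c; in particular an optimal downlink policy transfers the full power p_t over the single sub-channel with the maximum gain g'_n. -/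
/-- Single-user uplink IT with variable coding rates (Proposition 2): the
supremum of the uplink throughput over joint downlink allocations
`P ≥ 0, ∑ P_n ≤ p_t, ∑ P_n g'_n ≥ p_c` and uplink allocations
`Q ≥ 0, ∑ Q_n ≤ ∑ P_n g'_n − p_c` equals the supremum of the uplink throughput
over `Q ≥ 0` with budget `p_t · max_n g'_n − p_c`; an optimal downlink policy
transfers the full power `p_t` over a single sub-channel with maximum gain. -/
theorem stmt_8 (K : ℕ) (hK : 1 ≤ K) (g' g : Fin K → ℝ) (pt pc : ℝ)
    (hg' : ∀ n, 0 < g' n) (hg : ∀ n, 0 < g n) (hpt : 0 < pt) (hpc : 0 < pc)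
    (hfeas : pc ≤ pt * Finset.univ.sup' ⟨⟨0, hK⟩, Finset.mem_univ _⟩ g') :
    (sSup {r : ℝ | ∃ (P Q : Fin K → ℝ),
        (∀ n, 0 ≤ P n) ∧ (∑ n, P n) ≤ pt ∧ pc ≤ (∑ n, P n * g' n) ∧
        (∀ n, 0 ≤ Q n) ∧ (∑ n, Q n) ≤ (∑ n, P n * g' n) - pc ∧
        r = ∑ n, Real.log (1 + Q n * g n)} =
      sSup {r : ℝ | ∃ Q : Fin K → ℝ,
        (∀ n, 0 ≤ Q n) ∧
        (∑ n, Q n) ≤ pt * Finset.univ.sup' ⟨⟨0, hK⟩, Finset.mem_univ _⟩ g' - pc ∧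
        r = ∑ n, Real.log (1 + Q n * g n)}) ∧
    ∃ m : Fin K, g' m = Finset.univ.sup' ⟨⟨0, hK⟩, Finset.mem_univ _⟩ g' ∧
      (∀ n, 0 ≤ (if n = m then pt else 0 : ℝ)) ∧
      (∑ n, (if n = m then pt else 0 : ℝ)) ≤ pt ∧
      (∑ n, (if n = m then pt else 0 : ℝ) * g' n) =
        pt * Finset.univ.sup' ⟨⟨0, hK⟩, Finset.mem_univ _⟩ g' ∧
      pc ≤ ∑ n, (if n = m then pt else 0 : ℝ) * g' n := by
  set ne : Finset.Nonempty (Finset.univ : Finset (Fin K)) :=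
    ⟨⟨0, hK⟩, Finset.mem_univ _⟩ with hne
  set M : ℝ := Finset.univ.sup' ne g' with hM
  obtain ⟨m, -, hm⟩ := Finset.exists_mem_eq_sup' ne g'
  have hsumP : ∀ n : Fin K, (∑ k, (if k = m then pt else 0 : ℝ) * g' k) =
      pt * g' m := by
    intro n
    rw [Finset.sum_eq_single m]
    · simp
    · intro b _ hb; simp [hb]
    · intro h; exact absurd (Finset.mem_univ m) h
  have key : ∀ (P : Fin K → ℝ), (∀ n, 0 ≤ P n) → (∑ n, P n) ≤ pt →
      (∑ n, P n * g' n) ≤ pt * M := by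
    intro P hP hPt
    calc (∑ n, P n * g' n) ≤ ∑ n, P n * M := by
          apply Finset.sum_le_sum
          intro i _
          exact mul_le_mul_of_nonneg_left (Finset.le_sup' g' (Finset.mem_univ i)) (hP i)
        _ = (∑ n, P n) * M := by rw [Finset.sum_mul]
        _ ≤ pt * M := by
          apply mul_le_mul_of_nonneg_right hPt
          rw [hM, hm]; exact (hg' m).le
  constructor
  · congr 1
    ext r
    constructor
    · rintro ⟨P, Q, hP, hPt, hPc, hQ, hQb, hr⟩
      exact ⟨Q, hQ, hQb.trans (by linarith [key P hP hPt]), hr⟩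
    · rintro ⟨Q, hQ, hQb, hr⟩
      refine ⟨fun k => if k = m then pt else 0, Q, ?_, ?_, ?_, hQ, ?_, hr⟩
      · intro n; by_cases h : n = m <;> simp [h, hpt.le]
      · rw [Finset.sum_ite_eq' Finset.univ m fun _ => pt]; simp
      · rw [hsumP m, ← hm]; exact hfeas
      · rw [hsumP m, ← hm]; exact hQb
  · refine ⟨m, hm.symm, ?_, ?_, ?_, ?_⟩
    · intro n; by_cases h : n = m <;> simp [h, hpt.le]
    · rw [Finset.sum_ite_eq' Finset.univ m fun _ => pt]; simp
    · rw [hsumP m, hM, hm]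
    · rw [hsumP m, ← hm]; exact hfeas
end

section
/- Let K ≥ 1, let g : Fin K → ℝ be strictly positive channel gains with descending rearrangement ḡ_1 ≥ ḡ_2 ≥ … ≥ ḡ_K, let θ > 0 and B ≥ 0. Then the maximum of #{n : Q_n·g_n ≥ θ} over all Q : Fin K → ℝ with Q_n ≥ 0 for all n and ∑_{n=1}^K Q_n ≤ B equals the largest integer k ∈ {0,1,…,K} such that θ·∑_{n=1}^k 1/ḡ_n ≤ B. -/
lemma fin_le_strictMono {m K : ℕ} (φ : Fin m → Fin K) (h : StrictMono φ) :
    ∀ i : Fin m, (i : ℕ) ≤ (φ i : ℕ) := by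
  rintro ⟨i, hi⟩
  induction i with
  | zero => exact Nat.zero_le _
  | succ j ih =>
    have hj : j < m := Nat.lt_of_succ_lt hi
    have h1 : ((φ ⟨j, hj⟩ : Fin K) : ℕ) < ((φ ⟨j+1, hi⟩ : Fin K) : ℕ) :=
      h (by simp [Fin.lt_def])
    have h2 : j ≤ ((φ ⟨j, hj⟩ : Fin K) : ℕ) := by simpa using ih hj
    show j + 1 ≤ _
    omega

lemma card_filter_lt_fin {K k : ℕ} (hk : k ≤ K) :
    (Finset.univ.filter (fun n : Fin K => (n : ℕ) < k)).card = k := by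
  rw [Finset.card_filter, Fin.sum_univ_eq_sum_range (fun n => if n < k then 1 else 0),
    Finset.sum_ite, Finset.sum_const, Finset.sum_const]
  have : (Finset.range K).filter (fun i => i < k) = Finset.range k := by
    ext i; simp; omega
  simp [this]

lemma sum_min_le {K : ℕ} (f : Fin K → ℝ) (hf : Monotone f) (S : Finset (Fin K)) :
    ∑ n ∈ Finset.univ.filter (fun n : Fin K => (n : ℕ) < S.card), f n ≤ ∑ n ∈ S, f n := by
  set m := S.card with hm
  have hmK : m ≤ K := by simpa using (Finset.card_le_univ S)
  set φ : Fin m → Fin K := fun i => (S.orderIsoOfFin hm.symm i : Fin K)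
  have hφ : StrictMono φ := by
    intro a b hab
    exact (S.orderIsoOfFin hm.symm).lt_iff_lt.2 hab
  have key : ∀ i : Fin m, f (Fin.castLE hmK i) ≤ f (φ i) := by
    intro i
    apply hf
    have := fin_le_strictMono φ hφ i
    exact Fin.le_def.2 (by simpa using this)
  have h1 : ∑ n ∈ Finset.univ.filter (fun n : Fin K => (n : ℕ) < m), f n
      = ∑ i : Fin m, f (Fin.castLE hmK i) := by
    refine Finset.sum_bij' (fun n hn => (⟨(n:ℕ), by simpa using hn⟩ : Fin m))
      (fun i _ => Fin.castLE hmK i) (fun a ha => Finset.mem_univ _)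
      (fun a _ => by simp [a.2]) (fun a ha => by simp) (fun a ha => by simp)
      (fun a ha => by simp [Fin.castLE])
  have h2 : ∑ i : Fin m, f (φ i) = ∑ n ∈ S, f n := by
    rw [← Finset.sum_attach S f]
    exact Fintype.sum_equiv (S.orderIsoOfFin hm.symm).toEquiv _ _ (fun i => rfl)
  calc ∑ n ∈ Finset.univ.filter (fun n : Fin K => (n : ℕ) < m), f n
      = ∑ i : Fin m, f (Fin.castLE hmK i) := h1
    _ ≤ ∑ i : Fin m, f (φ i) := Finset.sum_le_sum (fun i _ => key i)
    _ = ∑ n ∈ S, f n := h2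

/-- Greedy channel inversion (Proposition 3): with gains `g_n > 0`, descending
rearrangement `ḡ`, threshold `θ > 0` and budget `B ≥ 0`, the maximum number of
streams with `Q_n g_n ≥ θ` over `Q ≥ 0, ∑ Q_n ≤ B` equals the largest
`k ∈ {0,…,K}` with `θ ∑_{n=1}^k 1/ḡ_n ≤ B`. -/
theorem stmt_9 (K : ℕ) (hK : 1 ≤ K) (g gbar : Fin K → ℝ) (σ : Equiv.Perm (Fin K))
    (θ B : ℝ) (kstar : ℕ)
    (hg : ∀ n, 0 < g n)
    (hperm : ∀ n, gbar n = g (σ n)) (hdesc : Antitone gbar)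
    (hθ : 0 < θ) (hB : 0 ≤ B)
    (hkK : kstar ≤ K)
    (hkfeas : θ * (∑ n ∈ Finset.univ.filter (fun n : Fin K => (n : ℕ) < kstar),
        1 / gbar n) ≤ B)
    (hkmax : ∀ k ≤ K,
      θ * (∑ n ∈ Finset.univ.filter (fun n : Fin K => (n : ℕ) < k), 1 / gbar n) ≤ B →
      k ≤ kstar) :
    IsGreatest
      {m : ℕ | ∃ Q : Fin K → ℝ, (∀ n, 0 ≤ Q n) ∧ (∑ n, Q n) ≤ B ∧
        m = (Finset.univ.filter (fun n : Fin K => θ ≤ Q n * g n)).card}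
      kstar := by
  have hgbar : ∀ n, 0 < gbar n := fun n => (hperm n) ▸ hg (σ n)
  constructor
  · -- membership
    refine ⟨fun n => if ((σ.symm n : Fin K) : ℕ) < kstar then θ / g n else 0, ?_, ?_, ?_⟩
    · intro n
      simp only []
      split
      · exact le_of_lt (div_pos hθ (hg n))
      · exact le_refl 0
    · have hcomp : ∑ n : Fin K,
          (if ((σ.symm n : Fin K) : ℕ) < kstar then θ / g n else 0)
          = ∑ m : Fin K, (if ((m : Fin K) : ℕ) < kstar then θ / g (σ m) else 0) := by
        rw [← Equiv.sum_comp σ (fun n => if ((σ.symm n : Fin K) : ℕ) < kstar then θ / g n else 0)]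
        simp
      rw [hcomp]
      have : ∑ m : Fin K, (if ((m : Fin K) : ℕ) < kstar then θ / g (σ m) else 0)
          = θ * ∑ n ∈ Finset.univ.filter (fun n : Fin K => (n : ℕ) < kstar), 1 / gbar n := by
        rw [Finset.mul_sum, ← Finset.sum_filter]
        apply Finset.sum_congr rfl
        intro x hx
        rw [hperm x]
        ring
      rw [this]; exact hkfeas
    · have hset : (Finset.univ.filter (fun n : Fin K =>
          θ ≤ (if ((σ.symm n : Fin K) : ℕ) < kstar then θ / g n else 0) * g n))
          = Finset.univ.filter (fun n : Fin K => ((σ.symm n : Fin K) : ℕ) < kstar) := by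
        ext n
        simp only [Finset.mem_filter, Finset.mem_univ, true_and]
        split
        · rename_i h
          rw [div_mul_cancel₀ θ (ne_of_gt (hg n))]
          simp [h]
        · rename_i h
          simp [h, not_le.2 hθ]
      rw [hset]
      have hcard : (Finset.univ.filter (fun n : Fin K => ((σ.symm n : Fin K) : ℕ) < kstar)).card
          = (Finset.univ.filter (fun n : Fin K => (n : ℕ) < kstar)).card := by
        refine Finset.card_bij' (fun n _ => σ.symm n) (fun n _ => σ n) ?_ ?_ ?_ ?_
        · intro a ha; simp only [Finset.mem_filter, Finset.mem_univ, true_and] at ha ⊢; exact ha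
        · intro a ha; simp only [Finset.mem_filter, Finset.mem_univ, true_and] at ha ⊢; simpa using ha
        · intro a _; simp
        · intro a _; simp
      rw [hcard, card_filter_lt_fin hkK]
  · -- upper bound
    rintro m ⟨Q, hQ0, hQsum, hm⟩
    set S := Finset.univ.filter (fun n : Fin K => θ ≤ Q n * g n) with hS
    have hmK : S.card ≤ K := by simpa using Finset.card_le_univ S
    subst hm
    apply hkmax S.card hmK
    -- monotonicity of 1/gbar
    have hf : Monotone (fun n : Fin K => 1 / gbar n) := by
      intro i j hij
      exact one_div_le_one_div_of_le (hgbar j) (hdesc hij)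
    set T := S.image σ.symm with hT
    have hTcard : T.card = S.card := Finset.card_image_of_injective S σ.symm.injective
    have h1 : ∑ n ∈ Finset.univ.filter (fun n : Fin K => (n : ℕ) < S.card), 1 / gbar n
        ≤ ∑ n ∈ T, 1 / gbar n := by
      have := sum_min_le (fun n : Fin K => 1 / gbar n) hf T
      rwa [hTcard] at this
    have h2 : ∑ n ∈ T, 1 / gbar n = ∑ x ∈ S, 1 / g x := by
      rw [hT, Finset.sum_image (fun a _ b _ h => σ.symm.injective h)]
      apply Finset.sum_congr rfl
      intro x _
      rw [hperm]
      simp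
    have h3 : ∀ x ∈ S, θ / g x ≤ Q x := by
      intro x hx
      rw [hS, Finset.mem_filter] at hx
      exact (div_le_iff₀ (hg x)).2 hx.2
    calc θ * ∑ n ∈ Finset.univ.filter (fun n : Fin K => (n : ℕ) < S.card), 1 / gbar n
        ≤ θ * ∑ x ∈ S, 1 / g x := by
          apply mul_le_mul_of_nonneg_left _ (le_of_lt hθ)
          rw [← h2]; exact h1
      _ = ∑ x ∈ S, θ / g x := by rw [Finset.mul_sum]; apply Finset.sum_congr rfl; intros; ring
      _ ≤ ∑ x ∈ S, Q x := Finset.sum_le_sum h3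
      _ ≤ ∑ n : Fin K, Q n := Finset.sum_le_sum_of_subset_of_nonneg (Finset.subset_univ S)
          (fun n _ _ => hQ0 n)
      _ ≤ B := hQsum
end

section
/- Let L ≥ 1, let h̄_1 ≥ h̄_2 ≥ … ≥ h̄_L > 0, let p_t > 0 and p_c > 0 with B := p_t − p_c·∑_{n=1}^L 1/h̄_n ≥ 0, and set η = (p_t + (1 − p_c)·∑_{n=1}^L 1/h̄_n)/L. If η ≥ 1/h̄_n for all 1 ≤ n ≤ L, then the allocation T*_n = η − 1/h̄_n maximizes ∑_{n=1}^L log(1 + T_n·h̄_n) over all T with T_n ≥ 0 and ∑_{n=1}^L T_n ≤ B, and the maximum value equals ∑_{n=1}^L log(h̄_n) + L·log(η). -/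
/-- Water-filling over the `L` active sub-channels in the multi-user downlink
variable-rate system: with descending gains `h̄_n > 0`, residual budget
`B = p_t − p_c ∑ 1/h̄_n ≥ 0` and water level `η = (p_t + (1−p_c)∑ 1/h̄_n)/L`
satisfying `η ≥ 1/h̄_n` for all `n`, the allocation `T*_n = η − 1/h̄_n`
maximizes `∑ log(1 + T_n h̄_n)` over `T ≥ 0` with `∑ T_n ≤ B`, and the maximum
value equals `∑ log h̄_n + L log η`. -/
theorem stmt_12 (L : ℕ) (hL : 1 ≤ L) (hbar : Fin L → ℝ) (pt pc : ℝ)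
    (hpos : ∀ n, 0 < hbar n) (hdesc : Antitone hbar)
    (hpt : 0 < pt) (hpc : 0 < pc)
    (hB : 0 ≤ pt - pc * ∑ n, 1 / hbar n)
    (hη : ∀ n, 1 / hbar n ≤ (pt + (1 - pc) * ∑ m, 1 / hbar m) / L) :
    (∀ n, 0 ≤ (pt + (1 - pc) * ∑ m, 1 / hbar m) / L - 1 / hbar n) ∧
    (∑ n, ((pt + (1 - pc) * ∑ m, 1 / hbar m) / L - 1 / hbar n)) ≤
      pt - pc * ∑ n, 1 / hbar n ∧
    (∀ T : Fin L → ℝ, (∀ n, 0 ≤ T n) →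
      (∑ n, T n) ≤ pt - pc * ∑ n, 1 / hbar n →
      (∑ n, Real.log (1 + T n * hbar n)) ≤
        ∑ n, Real.log (1 + ((pt + (1 - pc) * ∑ m, 1 / hbar m) / L - 1 / hbar n)
          * hbar n)) ∧
    (∑ n, Real.log (1 + ((pt + (1 - pc) * ∑ m, 1 / hbar m) / L - 1 / hbar n)
        * hbar n)) =
      (∑ n, Real.log (hbar n)) +
        L * Real.log ((pt + (1 - pc) * ∑ m, 1 / hbar m) / L) := by
  have hL0 : (0:ℝ) < L := by exact_mod_cast hL
  set S := ∑ m : Fin L, 1 / hbar m with hSdef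
  have hSpos : 0 < S := Finset.sum_pos (fun i _ => one_div_pos.2 (hpos i))
    ⟨⟨0, hL⟩, Finset.mem_univ _⟩
  set η := (pt + (1 - pc) * S) / (L:ℝ) with hηdef
  have hη0 : 0 < η :=
    lt_of_lt_of_le (one_div_pos.2 (hpos ⟨0, hL⟩)) (hη _)
  have hsumeq : ∑ n : Fin L, (η - 1 / hbar n) = pt - pc * S := by
    rw [Finset.sum_sub_distrib, Finset.sum_const, Finset.card_univ,
      Fintype.card_fin, ← hSdef, hηdef]
    field_simp
    ring_nf
    simp only [mul_inv_cancel_right₀ hL0.ne']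
    ring
  have hval : ∀ n : Fin L, 1 + (η - 1 / hbar n) * hbar n = η * hbar n := by
    intro n
    have := (hpos n).ne'
    field_simp
    ring
  have hvalsum : (∑ n : Fin L, Real.log (1 + (η - 1 / hbar n) * hbar n)) =
      (∑ n : Fin L, Real.log (hbar n)) + L * Real.log η := by
    have : ∀ n : Fin L, Real.log (1 + (η - 1 / hbar n) * hbar n) =
        Real.log (hbar n) + Real.log η := by
      intro n
      rw [hval n, Real.log_mul hη0.ne' (hpos n).ne', add_comm]
    rw [Finset.sum_congr rfl (fun n _ => this n), Finset.sum_add_distrib,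
      Finset.sum_const, Finset.card_univ, Fintype.card_fin, nsmul_eq_mul]
  refine ⟨fun n => sub_nonneg.2 (hη n), le_of_eq hsumeq, ?_, hvalsum⟩
  intro T hT hTsum
  rw [hvalsum]
  have hx : ∀ n : Fin L, (0:ℝ) < 1 / hbar n + T n := fun n =>
    add_pos_of_pos_of_nonneg (one_div_pos.2 (hpos n)) (hT n)
  have jensen := strictConcaveOn_log_Ioi.concaveOn.le_map_sum
    (t := Finset.univ) (w := fun _ : Fin L => (L:ℝ)⁻¹)
    (p := fun n => 1 / hbar n + T n)
    (fun i _ => inv_nonneg.2 hL0.le)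
    (by rw [Finset.sum_const, Finset.card_univ, Fintype.card_fin, nsmul_eq_mul]
        field_simp)
    (fun i _ => Set.mem_Ioi.2 (hx i))
  simp only [smul_eq_mul, ← Finset.mul_sum] at jensen
  have hsplit : (∑ n : Fin L, (1 / hbar n + T n)) = S + ∑ n, T n := by
    rw [Finset.sum_add_distrib, hSdef]
  have hmean_le : (L:ℝ)⁻¹ * (∑ n : Fin L, (1 / hbar n + T n)) ≤ η := by
    rw [hsplit, hηdef, div_eq_inv_mul]
    have : S + ∑ n, T n ≤ pt + (1 - pc) * S := by linarith
    exact mul_le_mul_of_nonneg_left this (by positivity)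
  have hmean_pos : 0 < (L:ℝ)⁻¹ * (∑ n : Fin L, (1 / hbar n + T n)) := by
    rw [hsplit]
    have h1 : 0 ≤ ∑ n, T n := Finset.sum_nonneg fun n _ => hT n
    have := hL0
    positivity
  have hlogmean : Real.log ((L:ℝ)⁻¹ * (∑ n : Fin L, (1 / hbar n + T n))) ≤
      Real.log η := Real.log_le_log hmean_pos hmean_le
  have key : (L:ℝ)⁻¹ * (∑ n : Fin L, Real.log (1 / hbar n + T n)) ≤
      Real.log η := le_trans jensen hlogmean
  have key2 : (∑ n : Fin L, Real.log (1 / hbar n + T n)) ≤ L * Real.log η := by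
    have := mul_le_mul_of_nonneg_left key hL0.le
    rwa [← mul_assoc, mul_inv_cancel₀ hL0.ne', one_mul] at this
  have hterm : ∀ n : Fin L, Real.log (1 + T n * hbar n) =
      Real.log (hbar n) + Real.log (1 / hbar n + T n) := by
    intro n
    have hne := (hpos n).ne'
    have h : hbar n * (1 / hbar n + T n) = 1 + T n * hbar n := by
      field_simp
    rw [← h, Real.log_mul (hpos n).ne' (hx n).ne']
  calc (∑ n : Fin L, Real.log (1 + T n * hbar n))
      = (∑ n : Fin L, Real.log (hbar n)) +
        ∑ n : Fin L, Real.log (1 / hbar n + T n) := by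
        rw [← Finset.sum_add_distrib]
        exact Finset.sum_congr rfl fun n _ => hterm n
    _ ≤ (∑ n : Fin L, Real.log (hbar n)) + L * Real.log η :=
        add_le_add_right key2 _
end

section
/- Let K ≥ 1, let h : Fin K → ℝ be strictly positive channel gains with descending rearrangement h̄_1 ≥ … ≥ h̄_K, let p_t > 0 and p_c > 0. For 1 ≤ ℓ ≤ K define η(ℓ) = (p_t + (1 − p_c)·∑_{n=1}^ℓ 1/h̄_n)/ℓ, let ℓ_max be the largest ℓ such that p_c·∑_{n=1}^ℓ 1/h̄_n ≤ p_t and η(ℓ) ≥ 1/h̄_n for all n ≤ ℓ, and let L* = argmax_{1≤ℓ≤ℓ_max} [∑_{n=1}^ℓ log(h̄_n) + ℓ·log(η(ℓ))]. Then the allocation that assigns P*_n = p_c/h̄_n + η(L*) − 1/h̄_n to the L* sub-channels with the largest gains and zero to the rest maximizes ∑_{n=1}^K 𝟙[P_n·h_n ≥ p_c]·log(1 + P_n·h_n − p_c) over all P with P_n ≥ 0 and ∑_{n=1}^K P_n ≤ p_t, and the maximum value is ∑_{n=1}^{L*} log(h̄_n) + L*·log(η(L*)). -/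
private lemma filt_map {K ℓ : ℕ} (hℓ : ℓ ≤ K) :
    Finset.univ.filter (fun n : Fin K => (n : ℕ) < ℓ)
      = Finset.map (Fin.castLEEmb hℓ) Finset.univ := by
  ext n
  simp only [Finset.mem_filter, Finset.mem_univ, true_and, Finset.mem_map]
  constructor
  · intro hn
    exact ⟨⟨(n : ℕ), hn⟩, by ext; simp⟩
  · rintro ⟨i, rfl⟩
    simp

private lemma filt_card {K ℓ : ℕ} (hℓ : ℓ ≤ K) :
    (Finset.univ.filter (fun n : Fin K => (n : ℕ) < ℓ)).card = ℓ := by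
  rw [filt_map hℓ, Finset.card_map, Finset.card_univ, Fintype.card_fin]

private lemma filt_succ {K m : ℕ} (hm : m < K) :
    Finset.univ.filter (fun n : Fin K => (n : ℕ) < m + 1)
      = insert ⟨m, hm⟩ (Finset.univ.filter (fun n : Fin K => (n : ℕ) < m)) := by
  ext n
  simp only [Finset.mem_filter, Finset.mem_univ, true_and, Finset.mem_insert]
  constructor
  · intro hn
    rcases Nat.lt_succ_iff_lt_or_eq.mp hn with h | h
    · exact Or.inr h
    · exact Or.inl (Fin.ext h)
  · rintro (rfl | hn)
    · exact Nat.lt_succ_self m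
    · exact Nat.lt_succ_of_lt hn

private lemma key_ineq {m w t : ℝ} (hm : 1 ≤ m) (hw : 1 ≤ w) (hwm : w < m + 1)
    (ht : m / (m + 1 - w) ≤ t) : Real.log w ≤ m * Real.log t := by
  have hmw : 0 < m + 1 - w := by linarith
  have hm0 : 0 < m := by linarith
  have hx : 0 < m / (m + 1 - w) := div_pos hm0 hmw
  have h1 : Real.log (m / (m + 1 - w)) ≤ Real.log t := Real.log_le_log hx ht
  have h2 := Real.one_sub_inv_le_log_of_pos hx
  rw [inv_div] at h2
  have h4 : 1 - (m + 1 - w) / m = (w - 1) / m := by field_simp; ring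
  rw [h4] at h2
  have h3 : Real.log w ≤ w - 1 := Real.log_le_sub_one_of_pos (by linarith)
  have h6 : w - 1 ≤ m * Real.log t := by
    have h5 := mul_le_mul_of_nonneg_left (h2.trans h1) hm0.le
    calc w - 1 = m * ((w - 1) / m) := by field_simp
      _ ≤ m * Real.log t := h5
  linarith

set_option maxHeartbeats 1000000 in
/-- Multi-user downlink IT with variable coding rates (Lemma 1): with gains
`h_n > 0`, descending rearrangement `h̄`, water levels `η(ℓ)`, `ℓ_max` the largest
feasible number of active mobiles and `L*` the throughput-maximizing number of
streams, the allocation giving `p_c/h̄_n + η(L*) − 1/h̄_n` to the `L*` strongest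
sub-channels and zero elsewhere maximizes
`∑ 𝟙[P_n h_n ≥ p_c] log(1 + P_n h_n − p_c)` subject to `P ≥ 0, ∑ P_n ≤ p_t`,
with maximum value `∑_{n=1}^{L*} log h̄_n + L* log η(L*)`. -/
theorem stmt_13 (K : ℕ) (hK : 1 ≤ K) (h hbar : Fin K → ℝ) (σ : Equiv.Perm (Fin K))
    (pt pc : ℝ) (lmax Lstar : ℕ)
    (hpos : ∀ n, 0 < h n)
    (hperm : ∀ n, hbar n = h (σ n)) (hdesc : Antitone hbar)
    (hpt : 0 < pt) (hpc : 0 < pc) :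
    let η : ℕ → ℝ := fun ℓ =>
      (pt + (1 - pc) * ∑ n ∈ Finset.univ.filter (fun n : Fin K => (n : ℕ) < ℓ),
        1 / hbar n) / ℓ
    let cond : ℕ → Prop := fun ℓ =>
      pc * (∑ n ∈ Finset.univ.filter (fun n : Fin K => (n : ℕ) < ℓ), 1 / hbar n)
        ≤ pt ∧
      ∀ n : Fin K, (n : ℕ) < ℓ → 1 / hbar n ≤ η ℓ
    let V : ℕ → ℝ := fun ℓ =>
      (∑ n ∈ Finset.univ.filter (fun n : Fin K => (n : ℕ) < ℓ),
        Real.log (hbar n)) + ℓ * Real.log (η ℓ)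
    let Pstar : Fin K → ℝ := fun n =>
      if ((σ.symm n : Fin K) : ℕ) < Lstar then pc / h n + (η Lstar - 1 / h n)
      else 0
    let F : (Fin K → ℝ) → ℝ := fun P =>
      ∑ n, if pc ≤ P n * h n then Real.log (1 + P n * h n - pc) else 0
    -- `ℓ_max` is the largest `ℓ ∈ {1,…,K}` satisfying the feasibility condition
    1 ≤ lmax → lmax ≤ K → cond lmax →
    (∀ ℓ, 1 ≤ ℓ → ℓ ≤ K → cond ℓ → ℓ ≤ lmax) →
    -- `L*` maximizes the throughput `V(ℓ)` over `1 ≤ ℓ ≤ ℓ_max`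
    1 ≤ Lstar → Lstar ≤ lmax →
    (∀ ℓ, 1 ≤ ℓ → ℓ ≤ lmax → V ℓ ≤ V Lstar) →
    (∀ n, 0 ≤ Pstar n) ∧ (∑ n, Pstar n) ≤ pt ∧
    (∀ P : Fin K → ℝ, (∀ n, 0 ≤ P n) → (∑ n, P n) ≤ pt → F P ≤ F Pstar) ∧
    F Pstar = V Lstar := by
  intro η cond V Pstar F hlm1 hlmK hcondlm hmaxsel hL1 hLlm hVmax
  have hbpos : ∀ n : Fin K, 0 < hbar n := fun n => by rw [hperm n]; exact hpos _
  have hLK : Lstar ≤ K := hLlm.trans hlmK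
  -- basic equation for η
  have hEta : ∀ ℓ : ℕ, 0 < ℓ → (ℓ : ℝ) * η ℓ
      = pt + (1 - pc) * ∑ n ∈ Finset.univ.filter (fun n : Fin K => (n : ℕ) < ℓ),
        1 / hbar n := by
    intro ℓ hℓ
    have hℓ0 : (ℓ : ℝ) ≠ 0 := Nat.cast_ne_zero.mpr hℓ.ne'
    simp only [η]
    rw [mul_comm, div_mul_cancel₀ _ hℓ0]
  -- monotonicity of η below lmax
  have hmonoaux : ∀ d ℓ, 1 ≤ ℓ → ℓ + d = lmax → η lmax ≤ η ℓ := by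
    intro d
    induction d with
    | zero =>
      intro ℓ _ hsum
      have hq : ℓ = lmax := by omega
      rw [hq]
    | succ d ih =>
      intro ℓ h1 hsum
      have ihl : η lmax ≤ η (ℓ + 1) := ih (ℓ + 1) (by omega) (by omega)
      have hℓK : ℓ < K := by omega
      have hlmK' : lmax - 1 < K := by omega
      have hsplit : ∑ n ∈ Finset.univ.filter (fun n : Fin K => (n : ℕ) < ℓ + 1), 1 / hbar n
          = 1 / hbar ⟨ℓ, hℓK⟩
            + ∑ n ∈ Finset.univ.filter (fun n : Fin K => (n : ℕ) < ℓ), 1 / hbar n := by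
        rw [filt_succ hℓK, Finset.sum_insert (by simp)]
      have hc1 : 1 / hbar ⟨ℓ, hℓK⟩ ≤ 1 / hbar ⟨lmax - 1, hlmK'⟩ := by
        apply one_div_le_one_div_of_le (hbpos _)
        apply hdesc
        rw [Fin.le_def]
        simp only []
        omega
      have hc2 : 1 / hbar ⟨lmax - 1, hlmK'⟩ ≤ η lmax := by
        apply hcondlm.2
        simp only []
        omega
      have hc3 : 1 / hbar ⟨ℓ, hℓK⟩ ≤ η (ℓ + 1) := hc1.trans (hc2.trans ihl)
      have hb0 : 0 < 1 / hbar ⟨ℓ, hℓK⟩ := one_div_pos.mpr (hbpos _)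
      have h1pc : (1 - pc) * (1 / hbar ⟨ℓ, hℓK⟩) ≤ η (ℓ + 1) := by
        have h2 : (1 - pc) * (1 / hbar ⟨ℓ, hℓK⟩) ≤ 1 * (1 / hbar ⟨ℓ, hℓK⟩) :=
          mul_le_mul_of_nonneg_right (by linarith) hb0.le
        rw [one_mul] at h2
        exact h2.trans hc3
      have e1 := hEta ℓ h1
      have e2 := hEta (ℓ + 1) (by omega)
      rw [hsplit] at e2
      have ekey : (ℓ : ℝ) * (η ℓ - η (ℓ + 1)) = η (ℓ + 1) - (1 - pc) * (1 / hbar ⟨ℓ, hℓK⟩) := by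
        push_cast at e2
        linear_combination e1 - e2
      have hstep : η (ℓ + 1) ≤ η ℓ := by
        have hl0 : (0 : ℝ) < (ℓ : ℝ) := by exact_mod_cast h1
        nlinarith [ekey, h1pc]
      exact ihl.trans hstep
  have hmono : ∀ ℓ, 1 ≤ ℓ → ℓ ≤ lmax → η lmax ≤ η ℓ := fun ℓ a b =>
    hmonoaux (lmax - ℓ) ℓ a (by omega)
  have hEtaL_ge : η lmax ≤ η Lstar := hmono Lstar hL1 hLlm
  have hlmK' : lmax - 1 < K := by omega
  have hclm : 1 / hbar ⟨lmax - 1, hlmK'⟩ ≤ η lmax := by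
    apply hcondlm.2
    simp only []
    omega
  have hEtaLpos : 0 < η Lstar :=
    lt_of_lt_of_le (lt_of_lt_of_le (one_div_pos.mpr (hbpos _)) hclm) hEtaL_ge
  have condL2 : ∀ n : Fin K, (n : ℕ) < Lstar → 1 / hbar n ≤ η Lstar := fun n hn =>
    (hcondlm.2 n (lt_of_lt_of_le hn hLlm)).trans hEtaL_ge
  -- V Lstar as one sum, and nonnegativity
  have hVL : V Lstar = ∑ n ∈ Finset.univ.filter (fun n : Fin K => (n : ℕ) < Lstar),
      (Real.log (hbar n) + Real.log (η Lstar)) := by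
    simp only [V]
    rw [Finset.sum_add_distrib, Finset.sum_const, filt_card hLK, nsmul_eq_mul]
  have hVL0 : 0 ≤ V Lstar := by
    rw [hVL]
    apply Finset.sum_nonneg
    intro n hn
    have hn' : (n : ℕ) < Lstar := (Finset.mem_filter.mp hn).2
    have h1 : 1 ≤ η Lstar * hbar n := (div_le_iff₀ (hbpos n)).mp (condL2 n hn')
    calc (0 : ℝ) ≤ Real.log (hbar n * η Lstar) := Real.log_nonneg (by nlinarith)
      _ = Real.log (hbar n) + Real.log (η Lstar) :=
        Real.log_mul (hbpos n).ne' hEtaLpos.ne'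
  -- KEY lemma: any clipped allocation on the ℓ strongest channels is dominated
  have key : ∀ ℓ, ℓ ≤ K → ∀ x : Fin K → ℝ,
      (∀ k : Fin K, (k : ℕ) < ℓ → 1 ≤ x k) →
      (∑ k ∈ Finset.univ.filter (fun n : Fin K => (n : ℕ) < ℓ),
        (x k - 1 + pc) / hbar k) ≤ pt →
      (∑ k ∈ Finset.univ.filter (fun n : Fin K => (n : ℕ) < ℓ),
        Real.log (x k)) ≤ V Lstar := by
    intro ℓ
    induction ℓ with
    | zero => intro _ x _ _; simpa using hVL0
    | succ m ih =>
      intro hK' x hx1 hxp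
      have hmK : m < K := hK'
      have hpcS : pc * (∑ n ∈ Finset.univ.filter (fun n : Fin K => (n : ℕ) < m + 1),
          1 / hbar n) ≤ pt := by
        rw [Finset.mul_sum]
        refine le_trans (Finset.sum_le_sum ?_) hxp
        intro k hk
        have hk' : (k : ℕ) < m + 1 := (Finset.mem_filter.mp hk).2
        have hxk := hx1 k hk'
        rw [mul_one_div]
        exact (div_le_div_iff_of_pos_right (hbpos k)).mpr (by linarith)
      have hsumy : (∑ k ∈ Finset.univ.filter (fun n : Fin K => (n : ℕ) < m + 1),
          x k / hbar k) ≤ ((m : ℝ) + 1) * η (m + 1) := by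
        have hpoint : ∀ k ∈ Finset.univ.filter (fun n : Fin K => (n : ℕ) < m + 1),
            x k / hbar k = (x k - 1 + pc) / hbar k + (1 - pc) * (1 / hbar k) := by
          intro k _
          rw [mul_one_div, ← add_div]
          congr 1
          ring
        rw [Finset.sum_congr rfl hpoint, Finset.sum_add_distrib, ← Finset.mul_sum]
        have he := hEta (m + 1) (Nat.succ_pos m)
        push_cast at he
        linarith
      by_cases hcond : cond (m + 1)
      · -- feasible case: tangent-line (Jensen) bound by V (m+1)
        have hlm : m + 1 ≤ lmax := hmaxsel (m + 1) (Nat.succ_le_succ (Nat.zero_le m)) hK' hcond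
        have hVle := hVmax (m + 1) (by omega) hlm
        have h0K : (0 : ℕ) < K := by omega
        have hEtaPos : 0 < η (m + 1) :=
          lt_of_lt_of_le (one_div_pos.mpr (hbpos ⟨0, h0K⟩))
            (hcond.2 ⟨0, h0K⟩ (Nat.succ_pos m))
        have main : ∀ k ∈ Finset.univ.filter (fun n : Fin K => (n : ℕ) < m + 1),
            Real.log (x k) ≤ (Real.log (hbar k) + Real.log (η (m + 1)))
              + (x k / hbar k / η (m + 1) - 1) := by
          intro k hk
          have hk' : (k : ℕ) < m + 1 := (Finset.mem_filter.mp hk).2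
          have hxk := hx1 k hk'
          have hbk := hbpos k
          have hx0 : (0 : ℝ) < x k := by linarith
          have h0 : 0 < x k / hbar k / η (m + 1) := by positivity
          have h2 := Real.log_le_sub_one_of_pos h0
          rw [Real.log_div (div_pos hx0 hbk).ne' hEtaPos.ne',
            Real.log_div hx0.ne' hbk.ne'] at h2
          linarith
        have hsum := Finset.sum_le_sum main
        rw [Finset.sum_add_distrib] at hsum
        have hpart1 : (∑ k ∈ Finset.univ.filter (fun n : Fin K => (n : ℕ) < m + 1),
            (Real.log (hbar k) + Real.log (η (m + 1)))) = V (m + 1) := by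
          simp only [V]
          rw [Finset.sum_add_distrib, Finset.sum_const, filt_card hK', nsmul_eq_mul]
        have hpart2 : (∑ k ∈ Finset.univ.filter (fun n : Fin K => (n : ℕ) < m + 1),
            (x k / hbar k / η (m + 1) - 1)) ≤ 0 := by
          rw [Finset.sum_sub_distrib, ← Finset.sum_div, Finset.sum_const,
            filt_card hK', nsmul_eq_mul, mul_one]
          rw [sub_nonpos, div_le_iff₀ hEtaPos]
          push_cast
          linarith [hsumy]
        rw [hpart1] at hsum
        exact hsum.trans ((add_le_of_nonpos_right hpart2).trans hVle)
      · -- infeasible case: reduce the number of streams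
        obtain ⟨n₀, hn₀l, hn₀⟩ : ∃ n : Fin K, (n : ℕ) < m + 1 ∧ η (m + 1) < 1 / hbar n := by
          by_contra hcon
          push_neg at hcon
          exact hcond ⟨hpcS, fun n hn => hcon n hn⟩
        have hm1 : 1 ≤ m := by
          by_contra hm0
          have hm0' : m = 0 := by omega
          subst hm0'
          have hfilt1 : Finset.univ.filter (fun n : Fin K => (n : ℕ) < 0 + 1)
              = {(⟨0, hmK⟩ : Fin K)} := by
            ext n
            simp only [Finset.mem_filter, Finset.mem_univ, true_and, Finset.mem_singleton,
              Fin.ext_iff]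
            omega
          have hn0 : n₀ = ⟨0, hmK⟩ := by
            apply Fin.ext
            show (n₀ : ℕ) = 0
            omega
          rw [hn0] at hn₀
          have he := hEta 1 one_pos
          rw [show ((0:ℕ) + 1) = 1 from rfl] at hfilt1
          rw [hfilt1, Finset.sum_singleton] at he
          have hpcS' := hpcS
          rw [hfilt1, Finset.sum_singleton] at hpcS'
          push_cast at he
          rw [one_mul] at he
          nlinarith [hn₀, hpcS', he]
        have hsplit := filt_succ hmK
        have hnotmem : (⟨m, hmK⟩ : Fin K)
            ∉ Finset.univ.filter (fun n : Fin K => (n : ℕ) < m) := by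
          simp
        set w := x ⟨m, hmK⟩ with hwdef
        set c := 1 / hbar (⟨m, hmK⟩ : Fin K) with hcdef
        set Sm := ∑ k ∈ Finset.univ.filter (fun n : Fin K => (n : ℕ) < m), x k / hbar k
          with hSmdef
        have hc0 : 0 < c := one_div_pos.mpr (hbpos _)
        have hw1 : 1 ≤ w := hx1 _ (Nat.lt_succ_self m)
        have hSm0 : 0 < Sm := by
          rw [hSmdef]
          apply Finset.sum_pos
          · intro k hk
            have hk' : (k : ℕ) < m := (Finset.mem_filter.mp hk).2
            exact div_pos (by linarith [hx1 k (Nat.lt_succ_of_lt hk')]) (hbpos k)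
          · refine ⟨⟨0, by omega⟩, ?_⟩
            simp only [Finset.mem_filter, Finset.mem_univ, true_and]
            omega
        have hηc : η (m + 1) < c := by
          refine lt_of_lt_of_le hn₀ ?_
          apply one_div_le_one_div_of_le (hbpos _)
          apply hdesc
          rw [Fin.le_def]
          show (n₀ : ℕ) ≤ m
          omega
        have hyb : Sm + w * c ≤ ((m : ℝ) + 1) * η (m + 1) := by
          rw [hsplit, Finset.sum_insert hnotmem] at hsumy
          rw [← mul_one_div (x ⟨m, hmK⟩) (hbar ⟨m, hmK⟩)] at hsumy
          rw [← hwdef, ← hcdef, ← hSmdef] at hsumy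
          linarith
        have hm1pos : (0 : ℝ) < (m : ℝ) + 1 := by positivity
        have hSmlt : Sm < ((m : ℝ) + 1 - w) * c := by
          have hml := mul_lt_mul_of_pos_left hηc hm1pos
          nlinarith [hyb, hml]
        have hwlt : w < (m : ℝ) + 1 := by nlinarith [hSm0, hc0, hSmlt]
        set q := (w - 1 + pc) * c with hqdef
        have hq0 : 0 < q := by
          rw [hqdef]
          apply mul_pos (by linarith) hc0
        set t := 1 + q / Sm with htdef
        have ht1 : 1 ≤ t := by
          rw [htdef]
          have := div_pos hq0 hSm0
          linarith
        have ht0 : 0 < t := by linarith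
        set x' : Fin K → ℝ := fun k => if (k : ℕ) < m then x k * t else 1 with hx'def
        have hx1' : ∀ k : Fin K, (k : ℕ) < m → 1 ≤ x' k := by
          intro k hk
          simp only [hx'def, if_pos hk]
          have := hx1 k (Nat.lt_succ_of_lt hk)
          nlinarith
        have hxp' : (∑ k ∈ Finset.univ.filter (fun n : Fin K => (n : ℕ) < m),
            (x' k - 1 + pc) / hbar k) ≤ pt := by
          have hrw : ∀ k ∈ Finset.univ.filter (fun n : Fin K => (n : ℕ) < m),
              (x' k - 1 + pc) / hbar k
                = (x k - 1 + pc) / hbar k + (x k / hbar k) * (q / Sm) := by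
            intro k hk
            have hk' : (k : ℕ) < m := (Finset.mem_filter.mp hk).2
            simp only [hx'def, if_pos hk', htdef]
            have hbk := (hbpos k).ne'
            field_simp
            ring
          rw [Finset.sum_congr rfl hrw, Finset.sum_add_distrib, ← Finset.sum_mul, ← hSmdef]
          have hqq : Sm * (q / Sm) = q := by
            rw [mul_comm, div_mul_cancel₀ _ hSm0.ne']
          rw [hqq]
          rw [hsplit, Finset.sum_insert hnotmem] at hxp
          have hq' : (x ⟨m, hmK⟩ - 1 + pc) / hbar ⟨m, hmK⟩ = q := by
            rw [hqdef, hcdef, ← hwdef, mul_one_div]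
          rw [hq'] at hxp
          linarith
        have hrec := ih (le_of_lt hmK) x' hx1' hxp'
        have hlogsum : (∑ k ∈ Finset.univ.filter (fun n : Fin K => (n : ℕ) < m + 1),
            Real.log (x k))
              ≤ ∑ k ∈ Finset.univ.filter (fun n : Fin K => (n : ℕ) < m),
                Real.log (x' k) := by
          rw [hsplit, Finset.sum_insert hnotmem]
          have hrw : ∀ k ∈ Finset.univ.filter (fun n : Fin K => (n : ℕ) < m),
              Real.log (x' k) = Real.log (x k) + Real.log t := by
            intro k hk
            have hk' : (k : ℕ) < m := (Finset.mem_filter.mp hk).2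
            simp only [hx'def, if_pos hk']
            have hxk : (0 : ℝ) < x k := by linarith [hx1 k (Nat.lt_succ_of_lt hk')]
            exact Real.log_mul hxk.ne' ht0.ne'
          rw [Finset.sum_congr rfl hrw, Finset.sum_add_distrib, Finset.sum_const,
            filt_card (le_of_lt hmK), nsmul_eq_mul]
          have hkey : Real.log w ≤ (m : ℝ) * Real.log t := by
            apply key_ineq (by exact_mod_cast hm1) hw1 hwlt
            have hmw : 0 < (m : ℝ) + 1 - w := by linarith
            have h1 : (w - 1) * c / Sm ≤ q / Sm := by
              rw [hqdef]
              exact (div_le_div_iff_of_pos_right hSm0).mpr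
                (mul_le_mul_of_nonneg_right (by linarith) hc0.le)
            have h2 : (w - 1) / ((m : ℝ) + 1 - w) ≤ (w - 1) * c / Sm := by
              rw [div_le_div_iff₀ hmw hSm0]
              nlinarith [mul_le_mul_of_nonneg_left hSmlt.le (sub_nonneg.mpr hw1)]
            have h3 : (m : ℝ) / ((m : ℝ) + 1 - w) = 1 + (w - 1) / ((m : ℝ) + 1 - w) := by
              field_simp
              ring
            rw [h3, htdef]
            linarith [h2.trans h1]
          linarith
        exact le_trans hlogsum hrec
  -- Part 1: nonnegativity of Pstar
  have part1 : ∀ n, 0 ≤ Pstar n := by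
    intro n
    simp only [Pstar]
    split_ifs with hn
    · have hhn : h n = hbar (σ.symm n) := by
        rw [hperm (σ.symm n), Equiv.apply_symm_apply]
      rw [hhn]
      have h1 := condL2 (σ.symm n) hn
      have h2 : 0 < pc / hbar (σ.symm n) := div_pos hpc (hbpos _)
      linarith
    · exact le_rfl
  -- total power of Pstar is exactly pt
  have hPsum : (∑ n, Pstar n) = pt := by
    rw [← Equiv.sum_comp σ Pstar]
    have hterm : ∀ m : Fin K, Pstar (σ m)
        = if (m : ℕ) < Lstar then η Lstar + (pc - 1) * (1 / hbar m) else 0 := by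
      intro m
      simp only [Pstar, Equiv.symm_apply_apply]
      split_ifs with hm
      · rw [← hperm m]
        have hbm := (hbpos m).ne'
        field_simp
        ring
      · rfl
    rw [Finset.sum_congr rfl (fun m _ => hterm m), ← Finset.sum_filter,
      Finset.sum_add_distrib, Finset.sum_const, filt_card hLK, nsmul_eq_mul,
      ← Finset.mul_sum]
    have he := hEta Lstar (by omega)
    linear_combination he
  -- the value of Pstar
  have part4 : F Pstar = V Lstar := by
    simp only [F]
    rw [← Equiv.sum_comp σ
      (fun n => if pc ≤ Pstar n * h n then Real.log (1 + Pstar n * h n - pc) else 0)]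
    have hterm : ∀ m : Fin K,
        (if pc ≤ Pstar (σ m) * h (σ m) then Real.log (1 + Pstar (σ m) * h (σ m) - pc) else 0)
          = if (m : ℕ) < Lstar then Real.log (hbar m) + Real.log (η Lstar) else 0 := by
      intro m
      have hb := hbpos m
      have hh : h (σ m) = hbar m := (hperm m).symm
      simp only [Pstar, Equiv.symm_apply_apply, hh]
      by_cases hm : (m : ℕ) < Lstar
      · rw [if_pos hm]
        have hPh : (pc / hbar m + (η Lstar - 1 / hbar m)) * hbar m
            = pc + (η Lstar * hbar m - 1) := by
          field_simp
        rw [hPh]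
        have h1 : 1 ≤ η Lstar * hbar m := (div_le_iff₀ hb).mp (condL2 m hm)
        rw [if_pos (by linarith)]
        have h2 : 1 + (pc + (η Lstar * hbar m - 1)) - pc = η Lstar * hbar m := by ring
        rw [h2, Real.log_mul hEtaLpos.ne' hb.ne', if_pos hm, add_comm]
      · rw [if_neg hm, zero_mul, if_neg (by linarith), if_neg hm]
    rw [Finset.sum_congr rfl (fun m _ => hterm m), ← Finset.sum_filter]
    exact hVL.symm
  -- Part 3: optimality
  have part3 : ∀ P : Fin K → ℝ, (∀ n, 0 ≤ P n) → (∑ n, P n) ≤ pt → F P ≤ V Lstar := by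
    intro P hP hPt
    classical
    set A := Finset.univ.filter (fun n : Fin K => pc ≤ P n * h n) with hAdef
    have hFP : F P = ∑ n ∈ A, Real.log (1 + P n * h n - pc) := by
      simp only [F, hAdef]
      rw [Finset.sum_filter]
    set ℓA := A.card with hlAdef
    have hℓAK : ℓA ≤ K := by
      rw [hlAdef, hAdef]
      calc (Finset.univ.filter (fun n : Fin K => pc ≤ P n * h n)).card
          ≤ Finset.univ.card := Finset.card_filter_le _ _
        _ = K := by simp
    set B := A.image σ.symm with hBdef
    have hBcard : B.card = ℓA := by
      rw [hBdef, Finset.card_image_of_injective _ (Equiv.injective σ.symm)]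
    set b := B.orderEmbOfFin hBcard with hbdef
    have hbmemA : ∀ i : Fin ℓA, σ (b i) ∈ A := by
      intro i
      have hmem : (b i : Fin K) ∈ Finset.image (⇑(Equiv.symm σ)) A :=
        Finset.orderEmbOfFin_mem B hBcard i
      obtain ⟨a, ha, hae⟩ := Finset.mem_image.mp hmem
      have hq : σ (b i) = a := by rw [← hae, Equiv.apply_symm_apply]
      exact hq ▸ ha
    have hblenat : ∀ (j : ℕ) (hj : j < ℓA), j ≤ ((b ⟨j, hj⟩ : Fin K) : ℕ) := by
      intro j
      induction j with
      | zero => intro _; exact Nat.zero_le _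
      | succ i ihi =>
        intro hj
        have h1 := ihi (Nat.lt_of_succ_lt hj)
        have h2 : b ⟨i, Nat.lt_of_succ_lt hj⟩ < b ⟨i + 1, hj⟩ := by
          apply b.strictMono
          rw [Fin.mk_lt_mk]
          omega
        rw [Fin.lt_def] at h2
        omega
    have hble : ∀ i : Fin ℓA, (i : ℕ) ≤ ((b i : Fin K) : ℕ) := by
      intro i
      have hq := hblenat i.1 i.2
      simpa using hq
    set x : Fin K → ℝ := fun k =>
      if hk : (k : ℕ) < ℓA then 1 + P (σ (b ⟨(k : ℕ), hk⟩)) * h (σ (b ⟨(k : ℕ), hk⟩)) - pc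
      else 1 with hxdef
    have hsum_eq : ∀ g : Fin K → ℝ, (∑ i : Fin ℓA, g (σ (b i))) = ∑ n ∈ A, g n := by
      intro g
      apply Finset.sum_bij (fun (i : Fin ℓA) (_ : i ∈ Finset.univ) => σ (b i))
      · intro i _
        exact hbmemA i
      · intro i _ j _ hij
        exact b.injective (σ.injective hij)
      · intro n hn
        have hmem : σ.symm n ∈ B := by
          rw [hBdef]
          exact Finset.mem_image_of_mem _ hn
        have hrange : (σ.symm n : Fin K) ∈ Set.range b := by
          rw [hbdef, Finset.range_orderEmbOfFin]
          exact hmem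
        obtain ⟨i, hi⟩ := hrange
        exact ⟨i, Finset.mem_univ i, by rw [hi, Equiv.apply_symm_apply]⟩
      · intro i _
        rfl
    have hxc : ∀ i : Fin ℓA, x (Fin.castLE hℓAK i)
        = 1 + P (σ (b i)) * h (σ (b i)) - pc := by
      intro i
      have hlt : ((Fin.castLE hℓAK i : Fin K) : ℕ) < ℓA := by simpa using i.isLt
      simp only [hxdef]
      rw [dif_pos hlt]
      have heq : (⟨((Fin.castLE hℓAK i : Fin K) : ℕ), hlt⟩ : Fin ℓA) = i := by
        apply Fin.ext
        simp
      rw [heq]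
    have hFP2 : F P = ∑ k ∈ Finset.univ.filter (fun n : Fin K => (n : ℕ) < ℓA),
        Real.log (x k) := by
      rw [hFP, ← hsum_eq (fun n => Real.log (1 + P n * h n - pc)), filt_map hℓAK,
        Finset.sum_map]
      apply Finset.sum_congr rfl
      intro i _
      rw [show ((Fin.castLEEmb hℓAK) i : Fin K) = Fin.castLE hℓAK i from rfl, hxc i]
    have hx1 : ∀ k : Fin K, (k : ℕ) < ℓA → 1 ≤ x k := by
      intro k hk
      simp only [hxdef]
      rw [dif_pos hk]
      have hq := (Finset.mem_filter.mp (hbmemA ⟨(k : ℕ), hk⟩)).2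
      linarith
    have hxpow : (∑ k ∈ Finset.univ.filter (fun n : Fin K => (n : ℕ) < ℓA),
        (x k - 1 + pc) / hbar k) ≤ pt := by
      rw [filt_map hℓAK, Finset.sum_map]
      have hterm : ∀ i : Fin ℓA,
          (x ((Fin.castLEEmb hℓAK) i) - 1 + pc) / hbar ((Fin.castLEEmb hℓAK) i)
            ≤ P (σ (b i)) := by
        intro i
        rw [show ((Fin.castLEEmb hℓAK) i : Fin K) = Fin.castLE hℓAK i from rfl, hxc i]
        have hhb : h (σ (b i)) = hbar (b i) := (hperm (b i)).symm
        have hPh : pc ≤ P (σ (b i)) * h (σ (b i)) := (Finset.mem_filter.mp (hbmemA i)).2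
        have hmono2 : hbar (b i) ≤ hbar (Fin.castLE hℓAK i) := by
          apply hdesc
          rw [Fin.le_def]
          simpa using hble i
        have hb1 : 0 < hbar (b i) := hbpos _
        have hb2 : 0 < hbar (Fin.castLE hℓAK i) := hbpos _
        have e1 : 1 + P (σ (b i)) * h (σ (b i)) - pc - 1 + pc
            = P (σ (b i)) * h (σ (b i)) := by ring
        rw [e1]
        calc P (σ (b i)) * h (σ (b i)) / hbar (Fin.castLE hℓAK i)
            ≤ P (σ (b i)) * h (σ (b i)) / hbar (b i) :=
              div_le_div_of_nonneg_left (by linarith) hb1 hmono2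
          _ = P (σ (b i)) := by
              rw [hhb, mul_div_assoc, div_self hb1.ne', mul_one]
      calc (∑ i : Fin ℓA,
            (x ((Fin.castLEEmb hℓAK) i) - 1 + pc) / hbar ((Fin.castLEEmb hℓAK) i))
          ≤ ∑ i : Fin ℓA, P (σ (b i)) := Finset.sum_le_sum (fun i _ => hterm i)
        _ = ∑ n ∈ A, P n := hsum_eq P
        _ ≤ ∑ n, P n :=
            Finset.sum_le_sum_of_subset_of_nonneg (Finset.subset_univ A)
              (fun n _ _ => hP n)
        _ ≤ pt := hPt
    rw [hFP2]
    exact key ℓA hℓAK x hx1 hxpow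
  refine ⟨part1, le_of_eq hPsum, fun P hP hPt => ?_, part4⟩
  rw [part4]
  exact part3 P hP hPt
end

section
/- Let h > 0, θ > 0, p_c > 0, and σ_a², σ_b² > 0 with σ_a² + σ_b² = 1. Let β̃* = (c(1) + √(c(1)² + 4d))/2 with c(1) = 1 − σ_b²/σ_a² − p_c/(θσ_a²) and d = σ_b²/σ_a². Then the minimum P ≥ 0 for which there exists β ∈ [0,1] with β·P·h/(β·σ_a² + σ_b²) ≥ θ and (1−β)·P·h ≥ p_c equals p_c/((1−β̃*)·h), and this minimum is attained with β = β̃*, at which both constraints hold with equality; moreover p_c/((1−β̃*)·h) = θ·(β̃*σ_a² + σ_b²)/(β̃*·h). -/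
/-- Minimum power to serve a mobile in the multi-user downlink fixed-rate
system: the least `P ≥ 0` for which some splitting ratio `β ∈ [0,1]` meets both
the SNR constraint `βPh/(βσa² + σb²) ≥ θ` and the circuit-power constraint
`(1−β)Ph ≥ p_c` equals `p_c/((1−β̃*)h)`, attained at `β = β̃*` with both
constraints tight; moreover `p_c/((1−β̃*)h) = θ(β̃*σa² + σb²)/(β̃* h)`. -/
theorem stmt_14 (h θ pc σa2 σb2 : ℝ)
    (hh : 0 < h) (hθ : 0 < θ) (hpc : 0 < pc)
    (ha : 0 < σa2) (hb : 0 < σb2) (hsum : σa2 + σb2 = 1) :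
    let c : ℝ := 1 - σb2 / σa2 - pc / (θ * σa2)
    let d : ℝ := σb2 / σa2
    let βt : ℝ := (c + Real.sqrt (c ^ 2 + 4 * d)) / 2
    IsLeast
      {P : ℝ | 0 ≤ P ∧ ∃ β : ℝ, 0 ≤ β ∧ β ≤ 1 ∧
        θ ≤ β * P * h / (β * σa2 + σb2) ∧ pc ≤ (1 - β) * P * h}
      (pc / ((1 - βt) * h)) ∧
    (βt * (pc / ((1 - βt) * h)) * h / (βt * σa2 + σb2) = θ ∧
      (1 - βt) * (pc / ((1 - βt) * h)) * h = pc) ∧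
    pc / ((1 - βt) * h) = θ * (βt * σa2 + σb2) / (βt * h) := by
  intro c d βt
  have hc' : θ * σa2 * c = θ * σa2 - θ * σb2 - pc := by
    show θ * σa2 * (1 - σb2 / σa2 - pc / (θ * σa2)) = _
    field_simp
  have hd' : σa2 * d = σb2 := by
    show σa2 * (σb2 / σa2) = σb2
    field_simp
  have hd0 : 0 < d := div_pos hb ha
  have hdisc : (0:ℝ) ≤ c ^ 2 + 4 * d := by nlinarith
  have hs2 : Real.sqrt (c ^ 2 + 4 * d) ^ 2 = c ^ 2 + 4 * d := Real.sq_sqrt hdisc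
  have hsnn : 0 ≤ Real.sqrt (c ^ 2 + 4 * d) := Real.sqrt_nonneg _
  have hβt : βt = (c + Real.sqrt (c ^ 2 + 4 * d)) / 2 := rfl
  clear_value c d βt
  have hβt0 : 0 < βt := by
    rw [hβt]
    nlinarith [hs2, hsnn, hd0]
  have hquad : βt ^ 2 = c * βt + d := by
    rw [hβt]; nlinarith [hs2]
  have hkey : θ * ((1 - βt) * (βt * σa2 + σb2)) = pc * βt := by
    linear_combination (-(θ * σa2)) * hquad + (-βt) * hc' + (-θ) * hd'
  have hden0 : 0 < βt * σa2 + σb2 := by positivity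
  have hβt1 : βt < 1 := by
    nlinarith [mul_pos hθ hden0, mul_pos hpc hβt0]
  have h1βt : 0 < 1 - βt := by linarith
  have hPh : 0 < (1 - βt) * h := by positivity
  have hPstar0 : 0 < pc / ((1 - βt) * h) := div_pos hpc hPh
  have hcirc : (1 - βt) * (pc / ((1 - βt) * h)) * h = pc := by
    field_simp
  have hlast : pc / ((1 - βt) * h) = θ * (βt * σa2 + σb2) / (βt * h) := by
    rw [div_eq_div_iff hPh.ne' (by positivity)]
    linear_combination (-h) * hkey
  have hsnr : βt * (pc / ((1 - βt) * h)) * h / (βt * σa2 + σb2) = θ := by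
    rw [hlast]
    field_simp
  refine ⟨⟨⟨hPstar0.le, βt, hβt0.le, hβt1.le, le_of_eq hsnr.symm, le_of_eq hcirc.symm⟩, ?_⟩,
    ⟨hsnr, hcirc⟩, hlast⟩
  rintro P ⟨hP0, β, hβ0, hβ1, hSNR, hPC⟩
  have hβpos : 0 < β := by
    rcases lt_or_eq_of_le hβ0 with h' | h'
    · exact h'
    · exfalso
      rw [← h'] at hSNR
      simp at hSNR
      linarith
  have hβlt1 : β < 1 := by
    by_contra hcon
    push_neg at hcon
    have h1 : (1 - β) * P * h ≤ 0 :=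
      mul_nonpos_of_nonpos_of_nonneg
        (mul_nonpos_of_nonpos_of_nonneg (by linarith) hP0) hh.le
    linarith
  have hdenβ : 0 < β * σa2 + σb2 := by positivity
  have hSNR' : θ * (β * σa2 + σb2) ≤ β * P * h := by
    rw [le_div_iff₀ hdenβ] at hSNR
    linarith
  rcases le_total β βt with hcase | hcase
  · rw [hlast, div_le_iff₀ (by positivity)]
    nlinarith [mul_le_mul_of_nonneg_left hSNR' hβt0.le,
      mul_nonneg (mul_nonneg hθ.le hb.le) (sub_nonneg.mpr hcase), hβpos]
  · rw [div_le_iff₀ hPh]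
    have h2 : 0 ≤ (β - βt) * (P * h) :=
      mul_nonneg (sub_nonneg.mpr hcase) (mul_nonneg hP0 hh.le)
    have h3 : P * ((1 - βt) * h) - (1 - β) * P * h = (β - βt) * (P * h) := by ring
    linarith
end

section
/- Let K ≥ 1, let h : Fin K → ℝ be strictly positive channel gains with descending rearrangement h̄_1 ≥ … ≥ h̄_K, let θ > 0, p_c > 0, p_t > 0, and σ_a², σ_b² > 0 with σ_a² + σ_b² = 1. Let β̃* = (c(1) + √(c(1)² + 4d))/2 with c(1) = 1 − σ_b²/σ_a² − p_c/(θσ_a²) and d = σ_b²/σ_a², and let m_max be the largest integer m ∈ {0,1,…,K} with (p_c/(1−β̃*))·∑_{n=1}^m 1/h̄_n ≤ p_t. Then the maximum over allocations P : Fin K → ℝ with P_n ≥ 0 and ∑_{n=1}^K P_n ≤ p_t and splitting ratios β_n ∈ [0,1] of ∑_{n=1}^K 𝟙[β_n·P_n·h_n/(β_nσ_a² + σ_b²) ≥ θ]·𝟙[(1−β_n)·P_n·h_n ≥ p_c] equals m_max, attained by assigning power p_c/((1−β̃*)·h̄_n) with β_n = β̃* to the m_max sub-channels with the largest gains and zero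 power elsewhere. -/
lemma aux_le_apply {m K : ℕ} (g : Fin m → Fin K) (hg : StrictMono g) :
    ∀ i : Fin m, (i : ℕ) ≤ (g i : ℕ) := by
  suffices H : ∀ k, ∀ i : Fin m, (i : ℕ) = k → k ≤ (g i : ℕ) from fun i => H _ i rfl
  intro k
  induction k with
  | zero => intro i _; exact Nat.zero_le _
  | succ k ih =>
    intro i hi
    have hk : k < m := by have := i.isLt; omega
    have hji : (⟨k, hk⟩ : Fin m) < i := by simp [Fin.lt_def, hi]
    have h1 : (g ⟨k, hk⟩ : ℕ) < (g i : ℕ) := hg hji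
    have h2 : k ≤ (g ⟨k, hk⟩ : ℕ) := ih _ rfl
    omega

lemma aux_card_filter {K m : ℕ} (hm : m ≤ K) :
    (Finset.univ.filter (fun n : Fin K => (n : ℕ) < m)).card = m := by
  have : Finset.univ.filter (fun n : Fin K => (n : ℕ) < m)
      = Finset.map (Fin.castLEEmb hm) Finset.univ := by
    ext n
    simp only [Finset.mem_filter, Finset.mem_univ, true_and, Finset.mem_map,
      Fin.castLEEmb_apply]
    constructor
    · intro hn; exact ⟨⟨n, hn⟩, Fin.ext rfl⟩
    · rintro ⟨i, rfl⟩; exact i.isLt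
  rw [this, Finset.card_map, Finset.card_univ, Fintype.card_fin]

lemma aux_subset_sum {K : ℕ} (f : Fin K → ℝ) (hf : Monotone f) (T : Finset (Fin K)) :
    ∑ n ∈ Finset.univ.filter (fun n : Fin K => (n : ℕ) < T.card), f n ≤ ∑ t ∈ T, f t := by
  have hm : T.card ≤ K := by simpa using Finset.card_le_univ T
  set m := T.card with hmdef
  set e : Fin m ↪o Fin K := T.orderEmbOfFin rfl with he
  have hT : ∑ t ∈ T, f t = ∑ i : Fin m, f (e i) := by
    refine (Finset.sum_bij (fun (i : Fin m) _ => e i) ?_ ?_ ?_ ?_).symm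
    · intro i _; exact Finset.orderEmbOfFin_mem T rfl i
    · intro i _ j _ hij; exact e.injective hij
    · intro t ht
      have hr := Finset.range_orderEmbOfFin T rfl
      have : t ∈ Set.range (T.orderEmbOfFin rfl) := by rw [hr]; exact ht
      obtain ⟨i, hi⟩ := this
      exact ⟨i, Finset.mem_univ i, hi⟩
    · intro i _; rfl
  have hL : ∑ n ∈ Finset.univ.filter (fun n : Fin K => (n : ℕ) < m), f n
      = ∑ i : Fin m, f (Fin.castLE hm i) := by
    refine Finset.sum_bij (fun (n : Fin K) hn => (⟨(n : ℕ), (Finset.mem_filter.mp hn).2⟩ : Fin m)) ?_ ?_ ?_ ?_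
    · intro n _; exact Finset.mem_univ _
    · intro n₁ h₁ n₂ h₂ hn; exact Fin.ext (by simpa using congrArg Fin.val hn)
    · intro i _
      refine ⟨Fin.castLE hm i, ?_, rfl⟩
      simp [Finset.mem_filter]
    · intro n hn; congr 1
  rw [hT, hL]
  refine Finset.sum_le_sum fun i _ => hf ?_
  have := aux_le_apply (fun i => e i) e.strictMono i
  exact Fin.le_def.mpr (by simpa using this)

lemma aux_served_power {θ pc σa2 σb2 βt x β : ℝ} (hθ : 0 < θ) (hpc : 0 < pc)
    (ha : 0 < σa2) (hb : 0 < σb2) (hβt0 : 0 < βt) (hβt1 : βt < 1)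
    (hkey : pc * βt = θ * (βt * σa2 + σb2) * (1 - βt))
    (hβl : 0 ≤ β) (hx : 0 ≤ x)
    (hsnr : θ ≤ β * x / (β * σa2 + σb2)) (hhv : pc ≤ (1 - β) * x) :
    pc ≤ (1 - βt) * x := by
  have hden : 0 < β * σa2 + σb2 := add_pos_of_nonneg_of_pos (mul_nonneg hβl ha.le) hb
  have hsnr' : θ * (β * σa2 + σb2) ≤ β * x := (le_div_iff₀ hden).mp hsnr
  have hxpos : 0 < x := by nlinarith [mul_nonneg hβl hx]
  have hβpos : 0 < β := by
    rcases hβl.lt_or_eq with h | h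
    · exact h
    · exfalso; rw [← h] at hsnr'; nlinarith [mul_pos hθ hb]
  by_cases hcase : βt ≤ β
  · nlinarith [mul_nonneg (sub_nonneg.mpr hcase) hx]
  · push_neg at hcase
    have h1 : pc * (β * βt) ≤ (1 - βt) * x * (β * βt) := by
      nlinarith [hkey,
        mul_le_mul_of_nonneg_left hsnr' (by nlinarith : (0:ℝ) ≤ βt * (1 - βt)),
        mul_nonneg (mul_nonneg (mul_pos hθ hb).le (by linarith : (0:ℝ) ≤ 1 - βt))
          (sub_nonneg.mpr hcase.le)]
    exact le_of_mul_le_mul_right h1 (mul_pos hβpos hβt0)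

lemma aux_beta {θ pc σa2 σb2 : ℝ} (hθ : 0 < θ) (hpc : 0 < pc)
    (ha : 0 < σa2) (hb : 0 < σb2) :
    0 < (1 - σb2 / σa2 - pc / (θ * σa2) +
        Real.sqrt ((1 - σb2 / σa2 - pc / (θ * σa2)) ^ 2 + 4 * (σb2 / σa2))) / 2 ∧
    (1 - σb2 / σa2 - pc / (θ * σa2) +
        Real.sqrt ((1 - σb2 / σa2 - pc / (θ * σa2)) ^ 2 + 4 * (σb2 / σa2))) / 2 < 1 ∧
    pc * ((1 - σb2 / σa2 - pc / (θ * σa2) +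
        Real.sqrt ((1 - σb2 / σa2 - pc / (θ * σa2)) ^ 2 + 4 * (σb2 / σa2))) / 2) =
      θ * (((1 - σb2 / σa2 - pc / (θ * σa2) +
        Real.sqrt ((1 - σb2 / σa2 - pc / (θ * σa2)) ^ 2 + 4 * (σb2 / σa2))) / 2) * σa2 + σb2) *
      (1 - (1 - σb2 / σa2 - pc / (θ * σa2) +
        Real.sqrt ((1 - σb2 / σa2 - pc / (θ * σa2)) ^ 2 + 4 * (σb2 / σa2))) / 2) := by
  obtain ⟨c, hc⟩ : ∃ c : ℝ, c = 1 - σb2 / σa2 - pc / (θ * σa2) := ⟨_, rfl⟩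
  obtain ⟨d, hd⟩ : ∃ d : ℝ, d = σb2 / σa2 := ⟨_, rfl⟩
  rw [← hc, ← hd]
  have hdpos : 0 < d := hd ▸ div_pos hb ha
  have hc2 : (0:ℝ) ≤ c ^ 2 + 4 * d := by positivity
  obtain ⟨s, hs⟩ : ∃ s : ℝ, s = Real.sqrt (c ^ 2 + 4 * d) := ⟨_, rfl⟩
  rw [← hs]
  have hsq : s ^ 2 = c ^ 2 + 4 * d := by rw [hs]; exact Real.sq_sqrt hc2
  have hsnn : 0 ≤ s := hs ▸ Real.sqrt_nonneg _
  have hpos : 0 < (c + s) / 2 := by nlinarith [hsq, hsnn, hdpos]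
  have h1 : 1 - c - d = pc / (θ * σa2) := by rw [hc, hd]; ring
  have hpcd : 0 < pc / (θ * σa2) := by positivity
  have h2c : 0 < 2 - c := by nlinarith
  have hslt : s < 2 - c := by
    rw [hs]; refine (Real.sqrt_lt' h2c).mpr ?_; nlinarith
  have hlt1 : (c + s) / 2 < 1 := by linarith
  have hquad : ((c + s) / 2) ^ 2 = c * ((c + s) / 2) + d := by linear_combination hsq / 4
  have hca : c * (θ * σa2) = θ * σa2 - θ * σb2 - pc := by
    rw [hc]; field_simp [ha.ne', hθ.ne']
  have hda : d * (θ * σa2) = θ * σb2 := by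
    rw [hd]; field_simp [ha.ne', hθ.ne']
  refine ⟨hpos, hlt1, ?_⟩
  obtain ⟨β, hβ⟩ : ∃ β : ℝ, β = (c + s) / 2 := ⟨_, rfl⟩
  rw [← hβ] at hquad ⊢
  have hquad2 : θ * σa2 * β ^ 2 = (θ * σa2 - θ * σb2 - pc) * β + θ * σb2 := by
    linear_combination (θ * σa2) * hquad + β * hca + hda
  linear_combination hquad2

/-- Multi-user downlink IT with fixed coding rates (Proposition 4): the maximum
number of served mobiles — those whose receive SNR `β_n P_n h_n/(β_n σa² + σb²)`
meets the threshold `θ` and whose harvested power `(1−β_n) P_n h_n` covers the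
circuit power `p_c` — over allocations `P ≥ 0` with `∑ P_n ≤ p_t` and splitting
ratios `β_n ∈ [0,1]`, equals `m_max`, the largest `m ∈ {0,…,K}` with
`(p_c/(1−β̃*)) ∑_{n=1}^m 1/h̄_n ≤ p_t`; it is attained by greedy channel
inversion with power `p_c/((1−β̃*) h̄_n)` and common ratio `β̃*` on the `m_max`
strongest sub-channels. -/
theorem stmt_15 (K : ℕ) (hK : 1 ≤ K) (h hbar : Fin K → ℝ) (σ : Equiv.Perm (Fin K))
    (θ pc pt σa2 σb2 : ℝ) (mmax : ℕ)
    (hpos : ∀ n, 0 < h n)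
    (hperm : ∀ n, hbar n = h (σ n)) (hdesc : Antitone hbar)
    (hθ : 0 < θ) (hpc : 0 < pc) (hpt : 0 < pt)
    (ha : 0 < σa2) (hb : 0 < σb2) (hsum : σa2 + σb2 = 1) :
    let c : ℝ := 1 - σb2 / σa2 - pc / (θ * σa2)
    let d : ℝ := σb2 / σa2
    let βt : ℝ := (c + Real.sqrt (c ^ 2 + 4 * d)) / 2
    let Pstar : Fin K → ℝ := fun n =>
      if ((σ.symm n : Fin K) : ℕ) < mmax then pc / ((1 - βt) * h n) else 0
    let served : (Fin K → ℝ) → (Fin K → ℝ) → ℕ := fun P β =>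
      (Finset.univ.filter (fun n : Fin K =>
        θ ≤ β n * P n * h n / (β n * σa2 + σb2) ∧
        pc ≤ (1 - β n) * P n * h n)).card
    -- `m_max` is the largest `m ∈ {0,…,K}` meeting the power constraint
    mmax ≤ K →
    (pc / (1 - βt)) *
      (∑ n ∈ Finset.univ.filter (fun n : Fin K => (n : ℕ) < mmax), 1 / hbar n)
      ≤ pt →
    (∀ m ≤ K,
      (pc / (1 - βt)) *
        (∑ n ∈ Finset.univ.filter (fun n : Fin K => (n : ℕ) < m), 1 / hbar n)
        ≤ pt → m ≤ mmax) →
    (∀ (P β : Fin K → ℝ), (∀ n, 0 ≤ P n) → (∑ n, P n) ≤ pt →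
      (∀ n, 0 ≤ β n ∧ β n ≤ 1) → served P β ≤ mmax) ∧
    ((∀ n, 0 ≤ Pstar n) ∧ (∑ n, Pstar n) ≤ pt ∧
      served Pstar (fun _ => βt) = mmax) := by
  intro c d βt Pstar served hmK hfeas hmaxl
  obtain ⟨hβt0, hβt1, hkey⟩ :
      0 < βt ∧ βt < 1 ∧ pc * βt = θ * (βt * σa2 + σb2) * (1 - βt) :=
    aux_beta hθ hpc ha hb
  have h1βt : 0 < 1 - βt := by linarith
  have hbarpos : ∀ n, 0 < hbar n := fun n => (hperm n) ▸ hpos _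
  have hmono : Monotone (fun k : Fin K => 1 / hbar k) := fun i j hij =>
    one_div_le_one_div_of_le (hbarpos j) (hdesc hij)
  constructor
  · -- upper bound
    intro P β hP hPsum hβr
    show (Finset.univ.filter (fun n : Fin K =>
        θ ≤ β n * P n * h n / (β n * σa2 + σb2) ∧
        pc ≤ (1 - β n) * P n * h n)).card ≤ mmax
    set S := Finset.univ.filter (fun n : Fin K =>
        θ ≤ β n * P n * h n / (β n * σa2 + σb2) ∧
        pc ≤ (1 - β n) * P n * h n) with hS
    have hSK : S.card ≤ K := by simpa using Finset.card_le_univ S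
    apply hmaxl S.card hSK
    -- each served mobile needs at least pc/((1-βt) h n)
    have hPn : ∀ n ∈ S, (pc / (1 - βt)) * (1 / h n) ≤ P n := by
      intro n hn
      obtain ⟨-, hsnr, hhv⟩ := Finset.mem_filter.mp hn
      have hsnr' : θ ≤ β n * (P n * h n) / (β n * σa2 + σb2) := by
        rw [← mul_assoc]; exact hsnr
      have hhv' : pc ≤ (1 - β n) * (P n * h n) := by rw [← mul_assoc]; exact hhv
      have hx : 0 ≤ P n * h n := mul_nonneg (hP n) (hpos n).le
      have hres : pc ≤ (1 - βt) * (P n * h n) :=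
        aux_served_power hθ hpc ha hb hβt0 hβt1 hkey (hβr n).1 hx hsnr' hhv'
      have hhn := hpos n
      rw [div_mul_div_comm, mul_one, div_le_iff₀ (by positivity)]
      nlinarith [hres]
    -- relate sorted sum to the served set
    set T := S.image σ.symm with hT
    have hTcard : T.card = S.card := Finset.card_image_of_injective S σ.symm.injective
    have hsumT : ∑ t ∈ T, (1 : ℝ) / hbar t = ∑ n ∈ S, 1 / h n := by
      rw [hT, Finset.sum_image (fun x _ y _ hxy => σ.symm.injective hxy)]
      refine Finset.sum_congr rfl fun n _ => ?_
      rw [hperm, Equiv.apply_symm_apply]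
    have hsub := aux_subset_sum (fun k : Fin K => 1 / hbar k) hmono T
    rw [hTcard, hsumT] at hsub
    have hc1 : 0 ≤ pc / (1 - βt) := by positivity
    calc (pc / (1 - βt)) * ∑ n ∈ Finset.univ.filter (fun n : Fin K => (n : ℕ) < S.card),
            1 / hbar n
        ≤ (pc / (1 - βt)) * ∑ n ∈ S, 1 / h n := by
          exact mul_le_mul_of_nonneg_left hsub hc1
      _ = ∑ n ∈ S, (pc / (1 - βt)) * (1 / h n) := Finset.mul_sum _ _ _
      _ ≤ ∑ n ∈ S, P n := Finset.sum_le_sum hPn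
      _ ≤ ∑ n, P n := Finset.sum_le_sum_of_subset_of_nonneg (Finset.subset_univ S)
            (fun n _ _ => hP n)
      _ ≤ pt := hPsum
  · -- achievability
    have hPstar : ∀ n, Pstar n = if ((σ.symm n : Fin K) : ℕ) < mmax
        then pc / ((1 - βt) * h n) else 0 := fun n => rfl
    refine ⟨?_, ?_, ?_⟩
    · intro n
      rw [hPstar]
      split
      · have := hpos n; positivity
      · exact le_refl 0
    · -- total power
      have e1 : ∑ n, Pstar n = ∑ n ∈ Finset.univ.filter
          (fun n : Fin K => ((σ.symm n : Fin K) : ℕ) < mmax), pc / ((1 - βt) * h n) := by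
        rw [Finset.sum_filter]
      have e2 : ∑ n ∈ Finset.univ.filter
          (fun n : Fin K => ((σ.symm n : Fin K) : ℕ) < mmax), pc / ((1 - βt) * h n)
          = ∑ m ∈ Finset.univ.filter (fun m : Fin K => (m : ℕ) < mmax),
              pc / ((1 - βt) * hbar m) := by
        refine (Finset.sum_equiv σ (fun i => ?_) (fun i hi => ?_)).symm
        · simp
        · rw [hperm]
      have e3 : ∑ m ∈ Finset.univ.filter (fun m : Fin K => (m : ℕ) < mmax),
              pc / ((1 - βt) * hbar m)
          = (pc / (1 - βt)) * ∑ m ∈ Finset.univ.filter (fun m : Fin K => (m : ℕ) < mmax),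
              1 / hbar m := by
        rw [Finset.mul_sum]
        refine Finset.sum_congr rfl fun m _ => ?_
        rw [div_mul_div_comm, mul_one]
      rw [e1, e2, e3]
      exact hfeas
    · -- number served
      show (Finset.univ.filter (fun n : Fin K =>
          θ ≤ βt * Pstar n * h n / (βt * σa2 + σb2) ∧
          pc ≤ (1 - βt) * Pstar n * h n)).card = mmax
      have hden : 0 < βt * σa2 + σb2 := by positivity
      have hfilter : Finset.univ.filter (fun n : Fin K =>
          θ ≤ βt * Pstar n * h n / (βt * σa2 + σb2) ∧
          pc ≤ (1 - βt) * Pstar n * h n)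
          = Finset.univ.filter (fun n : Fin K => ((σ.symm n : Fin K) : ℕ) < mmax) := by
        ext n
        simp only [Finset.mem_filter, Finset.mem_univ, true_and]
        have hhn := hpos n
        constructor
        · rintro ⟨-, h2⟩
          by_contra hge
          rw [hPstar, if_neg hge] at h2
          nlinarith
        · intro hlt
          rw [hPstar, if_pos hlt]
          constructor
          · have eX : βt * (pc / ((1 - βt) * h n)) * h n = θ * (βt * σa2 + σb2) := by
              generalize βt = B at h1βt hkey ⊢
              field_simp [h1βt.ne', hhn.ne']
              linear_combination hkey
            rw [eX, mul_div_assoc, div_self hden.ne', mul_one]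
          · have eY : (1 - βt) * (pc / ((1 - βt) * h n)) * h n = pc := by
              field_simp [h1βt.ne', hhn.ne']
            rw [eY]
      rw [hfilter]
      have himg : Finset.univ.filter (fun n : Fin K => ((σ.symm n : Fin K) : ℕ) < mmax)
          = (Finset.univ.filter (fun m : Fin K => (m : ℕ) < mmax)).image σ := by
        ext x
        simp only [Finset.mem_filter, Finset.mem_univ, true_and, Finset.mem_image]
        constructor
        · intro hx
          exact ⟨σ.symm x, hx, Equiv.apply_symm_apply σ x⟩
        · rintro ⟨m, hm, rfl⟩
          simpa using hm
      rw [himg, Finset.card_image_of_injective _ σ.injective, aux_card_filter hmK]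
end

section
/- Let K ≥ 1, let g' : Fin K → ℝ and g : Fin K → ℝ be strictly positive downlink and uplink channel gains, let θ > 0, p_c > 0, p_t > 0. Define v_n = (1/g'_n)·(θ/g_n + p_c) for each n, let v̄_1 ≤ v̄_2 ≤ … ≤ v̄_K be the ascending rearrangement of (v_n), and let q_max be the largest integer q ∈ {0,1,…,K} with ∑_{n=1}^q v̄_n ≤ p_t. Then the maximum over allocations P : Fin K → ℝ with P_n ≥ 0 and ∑_{n=1}^K P_n ≤ p_t of ∑_{n=1}^K 𝟙[(P_n·g'_n − p_c)·g_n ≥ θ]·𝟙[P_n·g'_n ≥ p_c] equals q_max, attained by assigning P_n = v_n to the q_max mobiles with the smallest values v_n and zero to the rest. -/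
lemma strictMono_fin_nat_le' {s K : ℕ} (φ : Fin s → Fin K) (h : StrictMono φ) (i : Fin s) :
    (i : ℕ) ≤ (φ i : ℕ) := by
  obtain ⟨k, hk⟩ := i
  induction k with
  | zero => exact Nat.zero_le _
  | succ j ih =>
    have hj : j < s := Nat.lt_of_succ_lt hk
    have h1 : φ ⟨j, hj⟩ < φ ⟨j+1, hk⟩ := h (Fin.mk_lt_mk.mpr (Nat.lt_succ_self j))
    have h2 : j ≤ (φ ⟨j, hj⟩ : ℕ) := ih hj
    have h3 : (φ ⟨j, hj⟩ : ℕ) < (φ ⟨j+1, hk⟩ : ℕ) := h1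
    simp only [Fin.val_mk]
    omega

lemma sum_smallest_le {K s : ℕ} (hs : s ≤ K) (f : Fin K → ℝ) (hf : Monotone f)
    (T : Finset (Fin K)) (hT : T.card = s) :
    ∑ n ∈ Finset.univ.filter (fun n : Fin K => (n : ℕ) < s), f n ≤ ∑ m ∈ T, f m := by
  have hR : ∑ m ∈ T, f m = ∑ i : Fin s, f (T.orderEmbOfFin hT i) := by
    rw [eq_comm]
    apply Finset.sum_nbij (T.orderEmbOfFin hT)
    · intro a _; exact T.orderEmbOfFin_mem hT a
    · intro a _ b _ hab; exact (T.orderEmbOfFin hT).injective hab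
    · intro b hb
      have : b ∈ Set.range (T.orderEmbOfFin hT) := by
        rw [T.range_orderEmbOfFin hT]; exact hb
      obtain ⟨i, hi⟩ := this
      exact ⟨i, Finset.mem_coe.mpr (Finset.mem_univ i), hi⟩
    · intros; rfl
  have hL : ∑ n ∈ Finset.univ.filter (fun n : Fin K => (n : ℕ) < s), f n
      = ∑ i : Fin s, f (Fin.castLE hs i) := by
    rw [eq_comm]
    apply Finset.sum_nbij (Fin.castLE hs)
    · intro a _; simp [a.isLt]
    · intro a _ b _ hab; exact Fin.castLE_injective hs hab
    · intro b hb
      simp only [Finset.coe_filter, Finset.mem_univ, true_and, Set.mem_setOf_eq] at hb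
      exact ⟨⟨(b : ℕ), hb⟩, Finset.mem_coe.mpr (Finset.mem_univ _), by ext; simp⟩
    · intros; rfl
  rw [hL, hR]
  apply Finset.sum_le_sum
  intro i _
  apply hf
  have := strictMono_fin_nat_le' _ ((T.orderEmbOfFin hT).strictMono) i
  simpa [Fin.le_def] using this

/-- Multi-user uplink IT with fixed coding rates (Proposition 5): with
`v_n = (θ/g_n + p_c)/g'_n`, ascending rearrangement `v̄`, and `q_max` the
largest `q ∈ {0,…,K}` with `∑_{n=1}^q v̄_n ≤ p_t`, the maximum number of served
mobiles — those with `(P_n g'_n − p_c) g_n ≥ θ` and `P_n g'_n ≥ p_c` — over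
allocations `P ≥ 0` with `∑ P_n ≤ p_t` equals `q_max`, attained by assigning
`P_n = v_n` to the `q_max` mobiles with the smallest `v_n` and zero elsewhere. -/
theorem stmt_17 (K : ℕ) (hK : 1 ≤ K) (g' g : Fin K → ℝ) (τ : Equiv.Perm (Fin K))
    (θ pc pt : ℝ) (qmax : ℕ) (vbar : Fin K → ℝ)
    (hg' : ∀ n, 0 < g' n) (hg : ∀ n, 0 < g n)
    (hθ : 0 < θ) (hpc : 0 < pc) (hpt : 0 < pt)
    (hperm : ∀ n, vbar n = (1 / g' (τ n)) * (θ / g (τ n) + pc))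
    (hasc : Monotone vbar)
    (hqK : qmax ≤ K)
    (hqfeas : (∑ n ∈ Finset.univ.filter (fun n : Fin K => (n : ℕ) < qmax), vbar n)
      ≤ pt)
    (hqmax : ∀ q ≤ K,
      (∑ n ∈ Finset.univ.filter (fun n : Fin K => (n : ℕ) < q), vbar n) ≤ pt →
      q ≤ qmax) :
    let served : (Fin K → ℝ) → ℕ := fun P =>
      (Finset.univ.filter (fun n : Fin K =>
        θ ≤ (P n * g' n - pc) * g n ∧ pc ≤ P n * g' n)).card
    let Pstar : Fin K → ℝ := fun n =>
      if ((τ.symm n : Fin K) : ℕ) < qmax then (1 / g' n) * (θ / g n + pc) else 0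
    (∀ P : Fin K → ℝ, (∀ n, 0 ≤ P n) → (∑ n, P n) ≤ pt → served P ≤ qmax) ∧
    ((∀ n, 0 ≤ Pstar n) ∧ (∑ n, Pstar n) ≤ pt ∧ served Pstar = qmax) := by
  intro served Pstar
  set v : Fin K → ℝ := fun n => (1 / g' n) * (θ / g n + pc) with hv
  have hvbar : ∀ n, vbar (τ.symm n) = v n := by
    intro n; rw [hperm]; simp [hv]
  have hvpos : ∀ n, 0 < v n := fun n =>
    mul_pos (one_div_pos.mpr (hg' n)) (add_pos (div_pos hθ (hg n)) hpc)
  constructor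
  · -- optimality
    intro P hP hsum
    set S := Finset.univ.filter (fun n : Fin K =>
        θ ≤ (P n * g' n - pc) * g n ∧ pc ≤ P n * g' n) with hS
    have hvleP : ∀ n ∈ S, v n ≤ P n := by
      intro n hn
      simp only [hS, Finset.mem_filter] at hn
      obtain ⟨_, h1, _⟩ := hn
      have h2 : θ / g n ≤ P n * g' n - pc := (div_le_iff₀ (hg n)).mpr h1
      have h3 : θ / g n + pc ≤ P n * g' n := by linarith
      rw [hv]
      simp only [one_div]
      rw [inv_mul_eq_div, div_le_iff₀ (hg' n)]
      exact h3
    -- sum of v over S ≤ pt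
    have hSsum : ∑ n ∈ S, v n ≤ pt := by
      calc ∑ n ∈ S, v n ≤ ∑ n ∈ S, P n := Finset.sum_le_sum hvleP
        _ ≤ ∑ n, P n := Finset.sum_le_sum_of_subset_of_nonneg (Finset.subset_univ S)
            (fun n _ _ => hP n)
        _ ≤ pt := hsum
    -- move to vbar via τ.symm
    set T := S.image τ.symm with hT
    have hTcard : T.card = S.card := Finset.card_image_of_injective S τ.symm.injective
    have hTsum : ∑ m ∈ T, vbar m = ∑ n ∈ S, v n := by
      rw [hT, Finset.sum_image (fun a _ b _ h => τ.symm.injective h)]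
      exact Finset.sum_congr rfl fun n _ => hvbar n
    have hScard : S.card ≤ K := by
      simpa using Finset.card_le_card (Finset.subset_univ S)
    have key := sum_smallest_le hScard vbar hasc T hTcard
    exact hqmax S.card hScard (by linarith [hTsum ▸ key])
  · refine ⟨fun n => ?_, ?_, ?_⟩
    · simp only [Pstar]
      split
      · exact le_of_lt (hvpos _)
      · exact le_refl 0
    · have : (∑ n, Pstar n) = ∑ m : Fin K, (if (m : ℕ) < qmax then vbar m else 0) := by
        rw [← Equiv.sum_comp τ (fun n => Pstar n)]
        refine Finset.sum_congr rfl fun m _ => ?_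
        simp only [Pstar, Equiv.symm_apply_apply]
        split
        · exact (hvbar (τ m)).symm.trans (by rw [Equiv.symm_apply_apply])
        · rfl
      rw [this, ← Finset.sum_filter]
      exact hqfeas
    · have hset : (Finset.univ.filter (fun n : Fin K =>
          θ ≤ (Pstar n * g' n - pc) * g n ∧ pc ≤ Pstar n * g' n))
          = Finset.univ.filter (fun n : Fin K => ((τ.symm n : Fin K) : ℕ) < qmax) := by
        apply Finset.filter_congr
        intro n _
        simp only [Pstar]
        constructor
        · rintro ⟨h1, h2⟩
          by_contra hc
          rw [if_neg hc] at h2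
          simp at h2
          linarith
        · intro hlt
          rw [if_pos hlt]
          have hgn := hg n; have hg'n := hg' n
          have hmul : (1 / g' n) * (θ / g n + pc) * g' n = θ / g n + pc := by
            field_simp
          constructor
          · rw [hmul]
            have : (θ / g n + pc - pc) * g n = θ := by
              field_simp
              ring
            rw [this]
          · rw [hmul]
            have : 0 ≤ θ / g n := le_of_lt (div_pos hθ hgn)
            linarith
      show (Finset.univ.filter _).card = qmax
      rw [hset]
      have : Finset.univ.filter (fun n : Fin K => ((τ.symm n : Fin K) : ℕ) < qmax)
          = (Finset.univ.filter (fun m : Fin K => (m : ℕ) < qmax)).image τ := by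
        ext n
        simp only [Finset.mem_filter, Finset.mem_image, Finset.mem_univ, true_and]
        constructor
        · intro h; exact ⟨τ.symm n, h, by simp⟩
        · rintro ⟨m, hm, rfl⟩; simpa using hm
      rw [this, Finset.card_image_of_injective _ τ.injective]
      -- card of {m : Fin K | m < qmax} = qmax
      have : Finset.univ.filter (fun m : Fin K => (m : ℕ) < qmax)
          = (Finset.univ : Finset (Fin qmax)).image (Fin.castLE hqK) := by
        ext m
        simp only [Finset.mem_filter, Finset.mem_image, Finset.mem_univ, true_and]
        constructor
        · intro h; exact ⟨⟨(m : ℕ), h⟩, by ext; simp⟩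
        · rintro ⟨i, rfl⟩; exact i.isLt
      rw [this, Finset.card_image_of_injective _ (Fin.castLE_injective hqK)]
      simp
end
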